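/- arXiv:2603.16071 — 6 statements merged into one kernel-verified Lean document; each statement's English description precedes it below -/
import Mathlib

section
/- Let Φ_a = ⟨φ_1, Tcf_{i_0}, Tcf_{i_1}, Tcf_{i_2}, φ_2, Tcf_{i_3}, Tcf_{i_4}, φ_3⟩ and Φ_b = ⟨φ_1, Tcf_{i_0}, Tcf_{i_2}, φ_2, Tcf_{i_3}, Tcf_{i_1}, Tcf_{i_4}, φ_3⟩ be two orderings of the same aircraft, where the subsequences φ_1, φ_2, φ_3 contain m_1, m_2, m_3 aircraft respectively. Suppose that in both Φ_a and Φ_b each aircraft other than the first is relevant to its leading aircraft, the first aircraft is the same and operates at the same time in both sequences, P_i > t_0 for all i, and every aircraft is delayed in both sequences: S_i(Φ_a) > P_i and S_i(Φ_b) > P_i for all i. Then F(Φ_a) − F(Φ_b) = S_{i_1}(Φ_a) − S_{i_1}(Φ_b) + D_1·(m_2 + 2) + D_2·(m_3 + 1), where D_1 = Y_{i_0 i_1} + Y_{i_1 i_2} − Y_{i_0 i_2} and D_2 = Y_{i_0 i_1} + Y_{i_1 i_2} + Y_{i_3 i_4} − Y_{i_0 i_2} − Y_{i_3 i_1} − Y_{i_1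 i_4}. -/
noncomputable section

/-- Total delay of the aircraft in the list `l` (an ordering of the aircraft),
where `S x` is the rescheduled operation time of aircraft `x` in this sequence and
`P x` is its scheduled operation time: `F(φ) = Σ_i max (S_i - P_i) 0`. -/
def totalDelay (S P : ℕ → ℝ) (l : List ℕ) : ℝ :=
  (l.map (fun x => max (S x - P x) 0)).sum

private lemma chain_diff (Y : ℕ → ℕ → ℝ) (Sa Sb : ℕ → ℝ) (d : ℝ) :
    ∀ l : List ℕ, l.Chain' (fun k m => Sa m = Sa k + Y k m) →
      l.Chain' (fun k m => Sb m = Sb k + Y k m) →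
      (∀ a, l.head? = some a → Sa a - Sb a = d) →
      ∀ x ∈ l, Sa x - Sb x = d := by
  intro l
  induction l with
  | nil => intro _ _ _ x hx; simp at hx
  | cons a t ih =>
    intro ha hb hd x hx
    rcases List.mem_cons.mp hx with hx | hx
    · subst hx; exact hd x rfl
    · cases t with
      | nil => simp at hx
      | cons b t' =>
        have rab : Sa b = Sa a + Y a b := (List.isChain_cons_cons.mp ha).1
        have rab' : Sb b = Sb a + Y a b := (List.isChain_cons_cons.mp hb).1
        refine ih (List.isChain_cons_cons.mp ha).2 (List.isChain_cons_cons.mp hb).2 ?_ x hx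
        intro c hc
        simp only [List.head?_cons, Option.some.injEq] at hc
        subst hc
        have := hd a rfl
        rw [rab, rab']; linarith

private lemma sum_diff_const (f g : ℕ → ℝ) (d : ℝ) (l : List ℕ)
    (h : ∀ x ∈ l, f x - g x = d) :
    (l.map f).sum - (l.map g).sum = l.length * d := by
  induction l with
  | nil => simp
  | cons a t ih =>
    have h1 := h a (by simp)
    have h2 := ih (fun x hx => h x (by simp [hx]))
    simp only [List.map_cons, List.sum_cons, List.length_cons]
    push_cast
    linarith

/-- Theorem 3(1) of the paper.  `Φa = ⟨φ1, i0, i1, i2, φ2, i3, i4, φ3⟩` and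
`Φb = ⟨φ1, i0, i2, φ2, i3, i1, i4, φ3⟩` are two orderings of the same aircraft; in both, each
aircraft other than the first is relevant to its leading aircraft
(`S l = S k + Y k l` for consecutive aircraft), the common first aircraft operates at the
same time in both sequences, `P z > t0` for all aircraft, and every aircraft is delayed in
both sequences.  Then
`F(Φa) − F(Φb) = S_{i1}(Φa) − S_{i1}(Φb) + D1·(m2+2) + D2·(m3+1)` with
`D1 = Y i0 i1 + Y i1 i2 − Y i0 i2` and
`D2 = Y i0 i1 + Y i1 i2 + Y i3 i4 − Y i0 i2 − Y i3 i1 − Y i1 i4`. -/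
theorem delay_difference_after_moving_one_aircraft
    (Y : ℕ → ℕ → ℝ) (P Sa Sb : ℕ → ℝ) (t0 : ℝ)
    (φ1 φ2 φ3 : List ℕ) (i0 i1 i2 i3 i4 : ℕ)
    (Φa Φb : List ℕ)
    (hΦa : Φa = φ1 ++ [i0, i1, i2] ++ φ2 ++ [i3, i4] ++ φ3)
    (hΦb : Φb = φ1 ++ [i0, i2] ++ φ2 ++ [i3, i1, i4] ++ φ3)
    (hnodup : Φa.Nodup)
    (hchaina : Φa.Chain' (fun k l => Sa l = Sa k + Y k l))
    (hchainb : Φb.Chain' (fun k l => Sb l = Sb k + Y k l))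
    (hfirst : ∀ z, Φa.head? = some z → Sa z = Sb z)
    (hP : ∀ z ∈ Φa, t0 < P z)
    (hdelaya : ∀ z ∈ Φa, P z < Sa z)
    (hdelayb : ∀ z ∈ Φb, P z < Sb z) :
    totalDelay Sa P Φa - totalDelay Sb P Φb =
      Sa i1 - Sb i1
        + (Y i0 i1 + Y i1 i2 - Y i0 i2) * ((φ2.length : ℝ) + 2)
        + (Y i0 i1 + Y i1 i2 + Y i3 i4 - Y i0 i2 - Y i3 i1 - Y i1 i4)
          * ((φ3.length : ℝ) + 1) := by
  clear hnodup hP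
  set La := φ1 ++ [i0, i1, i2] ++ φ2 ++ [i3, i4] ++ φ3 with hLa
  set Lb := φ1 ++ [i0, i2] ++ φ2 ++ [i3, i1, i4] ++ φ3 with hLb
  subst hΦa hΦb
  -- infix facts
  have infA_a : (φ1 ++ [i0]) <:+: La :=
    ⟨[], [i1, i2] ++ φ2 ++ [i3, i4] ++ φ3, by simp [hLa]⟩
  have infA_b : (φ1 ++ [i0]) <:+: Lb :=
    ⟨[], [i2] ++ φ2 ++ [i3, i1, i4] ++ φ3, by simp [hLb]⟩
  have inf012 : [i0, i1, i2] <:+: La :=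
    ⟨φ1, φ2 ++ [i3, i4] ++ φ3, by simp [hLa]⟩
  have inf02 : [i0, i2] <:+: Lb :=
    ⟨φ1, φ2 ++ [i3, i1, i4] ++ φ3, by simp [hLb]⟩
  have infM_a : (i2 :: (φ2 ++ [i3])) <:+: La :=
    ⟨φ1 ++ [i0, i1], [i4] ++ φ3, by simp [hLa]⟩
  have infM_b : (i2 :: (φ2 ++ [i3])) <:+: Lb :=
    ⟨φ1 ++ [i0], [i1, i4] ++ φ3, by simp [hLb]⟩
  have inf34 : [i3, i4] <:+: La :=
    ⟨φ1 ++ [i0, i1, i2] ++ φ2, φ3, by simp [hLa]⟩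
  have inf314 : [i3, i1, i4] <:+: Lb :=
    ⟨φ1 ++ [i0, i2] ++ φ2, φ3, by simp [hLb]⟩
  have infT_a : (i4 :: φ3) <:+: La :=
    ⟨φ1 ++ [i0, i1, i2] ++ φ2 ++ [i3], [], by simp [hLa]⟩
  have infT_b : (i4 :: φ3) <:+: Lb :=
    ⟨φ1 ++ [i0, i2] ++ φ2 ++ [i3, i1], [], by simp [hLb]⟩
  -- head of La is head of φ1 ++ [i0]
  have hheadA : ∀ a, (φ1 ++ [i0]).head? = some a → Sa a - Sb a = 0 := by
    intro a ha
    rcases List.exists_cons_of_ne_nil (l := φ1 ++ [i0]) (by simp) with ⟨c, t, hct⟩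
    rw [hct, List.head?_cons, Option.some.injEq] at ha
    subst ha
    have hh : La.head? = some c := by
      have hsplit : La = (φ1 ++ [i0]) ++ ([i1, i2] ++ φ2 ++ [i3, i4] ++ φ3) := by
        simp [hLa]
      rw [hsplit, hct]; rfl
    have := hfirst c hh
    linarith
  -- equality on the common prefix
  have hA : ∀ x ∈ φ1 ++ [i0], Sa x - Sb x = 0 :=
    chain_diff Y Sa Sb 0 (φ1 ++ [i0]) (hchaina.infix infA_a) (hchainb.infix infA_b) hheadA
  have hi0 : Sa i0 = Sb i0 := by have := hA i0 (by simp); linarith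
  -- link facts
  have c012 := hchaina.infix inf012
  simp only [List.isChain_cons_cons, List.isChain_singleton, and_true] at c012
  obtain ⟨r01, r12⟩ := c012
  have c02 := hchainb.infix inf02
  simp only [List.isChain_cons_cons, List.isChain_singleton, and_true] at c02
  have hd1 : Sa i2 - Sb i2 = Y i0 i1 + Y i1 i2 - Y i0 i2 := by
    rw [r12, r01, c02, hi0]; ring
  -- middle segment
  have hM : ∀ x ∈ i2 :: (φ2 ++ [i3]), Sa x - Sb x = Y i0 i1 + Y i1 i2 - Y i0 i2 :=
    chain_diff Y Sa Sb _ _ (hchaina.infix infM_a) (hchainb.infix infM_b)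
      (by intro a ha; simp only [List.head?_cons, Option.some.injEq] at ha; subst ha; exact hd1)
  have hi3 : Sa i3 - Sb i3 = Y i0 i1 + Y i1 i2 - Y i0 i2 := hM i3 (by simp)
  -- links around i4
  have c34 := hchaina.infix inf34
  simp only [List.isChain_cons_cons, List.isChain_singleton, and_true] at c34
  have c314 := hchainb.infix inf314
  simp only [List.isChain_cons_cons, List.isChain_singleton, and_true] at c314
  obtain ⟨r31, r14⟩ := c314
  have hd2 : Sa i4 - Sb i4 =
      Y i0 i1 + Y i1 i2 + Y i3 i4 - Y i0 i2 - Y i3 i1 - Y i1 i4 := by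
    rw [c34, r14, r31]; linarith
  -- tail segment
  have hT : ∀ x ∈ i4 :: φ3, Sa x - Sb x =
      Y i0 i1 + Y i1 i2 + Y i3 i4 - Y i0 i2 - Y i3 i1 - Y i1 i4 :=
    chain_diff Y Sa Sb _ _ (hchaina.infix infT_a) (hchainb.infix infT_b)
      (by intro a ha; simp only [List.head?_cons, Option.some.injEq] at ha; subst ha; exact hd2)
  -- rewrite totalDelay as sums of S - P
  have hmaxa : totalDelay Sa P La = (La.map (fun x => Sa x - P x)).sum := by
    unfold totalDelay
    congr 1
    refine List.map_congr_left ?_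
    intro x hx
    exact max_eq_left (by have := hdelaya x hx; linarith)
  have hmaxb : totalDelay Sb P Lb = (Lb.map (fun x => Sb x - P x)).sum := by
    unfold totalDelay
    congr 1
    refine List.map_congr_left ?_
    intro x hx
    exact max_eq_left (by have := hdelayb x hx; linarith)
  rw [hmaxa, hmaxb, hLa, hLb]
  set f : ℕ → ℝ := fun x => Sa x - P x with hf
  set g : ℕ → ℝ := fun x => Sb x - P x with hg
  -- segment sums
  have s1 : (φ1.map f).sum - (φ1.map g).sum = φ1.length * 0 :=
    sum_diff_const f g 0 φ1 (fun x hx => by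
      have := hA x (by simp [hx]); simp only [hf, hg]; linarith)
  have s2 : (φ2.map f).sum - (φ2.map g).sum =
      φ2.length * (Y i0 i1 + Y i1 i2 - Y i0 i2) :=
    sum_diff_const f g _ φ2 (fun x hx => by
      have := hM x (by simp [hx]); simp only [hf, hg]; linarith)
  have s3 : (φ3.map f).sum - (φ3.map g).sum =
      φ3.length * (Y i0 i1 + Y i1 i2 + Y i3 i4 - Y i0 i2 - Y i3 i1 - Y i1 i4) :=
    sum_diff_const f g _ φ3 (fun x hx => by
      have := hT x (by simp [hx]); simp only [hf, hg]; linarith)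
  have e0 : f i0 - g i0 = 0 := by simp only [hf, hg]; linarith
  have e1 : f i1 - g i1 = Sa i1 - Sb i1 := by simp only [hf, hg]; ring
  have e2 : f i2 - g i2 = Y i0 i1 + Y i1 i2 - Y i0 i2 := by simp only [hf, hg]; linarith
  have e3 : f i3 - g i3 = Y i0 i1 + Y i1 i2 - Y i0 i2 := by simp only [hf, hg]; linarith
  have e4 : f i4 - g i4 =
      Y i0 i1 + Y i1 i2 + Y i3 i4 - Y i0 i2 - Y i3 i1 - Y i1 i4 := by
    simp only [hf, hg]; linarith
  simp only [List.map_append, List.sum_append, List.map_cons, List.sum_cons,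
    List.map_nil, List.sum_nil]
  push_cast
  linarith
end
end

section
/- Let Φ_a = ⟨φ_1, Tcf_{i_0}, Tcf_{i_1}, Tcf_{i_2}, φ_2, Tcf_{i_3}, Tcf_{i_4}, φ_3⟩ and Φ_b = ⟨φ_1, Tcf_{i_0}, Tcf_{i_2}, φ_2, Tcf_{i_3}, Tcf_{i_1}, Tcf_{i_4}, φ_3⟩ be two orderings of the same aircraft, where the subsequences φ_1, φ_2, φ_3 contain m_1, m_2, m_3 aircraft respectively. Suppose that in both Φ_a and Φ_b each aircraft other than the first is relevant to its leading aircraft, the first aircraft is the same and operates at the same time in both sequences, P_i > t_0 for all i, and every aircraft is delayed in both sequences: S_i(Φ_a) > P_i and S_i(Φ_b) > P_i for all i. Let D_1 = Y_{i_0 i_1} + Y_{i_1 i_2} − Y_{i_0 i_2} and D_2 = Y_{i_0 i_1} + Y_{i_1 i_2} + Y_{i_3 i_4} − Y_{i_0 i_2} − Y_{i_3 i_1} − Y_{i_1 i_4}. If D_2 = 0 and D_1·(m_2 + 2) ≤ S_{i_1}(Φ_b) − S_{i_1}(Φ_a), then F(Φ_a) − F(Φ_b) ≤ 0. -/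
noncomputable section

lemma offset_chain (Y : ℕ → ℕ → ℝ) (Sa Sb : ℕ → ℝ) (c : ℝ) :
    ∀ l : List ℕ, l.Chain' (fun k m => Sa m = Sa k + Y k m) →
      l.Chain' (fun k m => Sb m = Sb k + Y k m) →
      (∀ z, l.head? = some z → Sa z = Sb z + c) →
      ∀ x ∈ l, Sa x = Sb x + c
  | [], _, _, _ => by simp
  | [a], _, _, hh => by
      intro x hx
      simp only [List.mem_singleton] at hx
      subst hx
      exact hh x rfl
  | a :: b :: t, ha, hb, hh => by
      unfold List.Chain' at ha hb
      rw [List.isChain_cons_cons] at ha hb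
      have h0 : Sa a = Sb a + c := hh a rfl
      have h1 : Sa b = Sb b + c := by rw [ha.1, hb.1, h0]; ring
      intro x hx
      rcases List.mem_cons.1 hx with rfl | hx
      · exact h0
      · exact offset_chain Y Sa Sb c (b :: t) ha.2 hb.2
          (by intro z hz; simp only [List.head?_cons, Option.some.injEq] at hz
              subst hz; exact h1) x hx

lemma sum_shift (f g : ℕ → ℝ) (c : ℝ) :
    ∀ l : List ℕ, (∀ x ∈ l, f x = g x + c) →
      (l.map f).sum = (l.map g).sum + l.length * c
  | [], _ => by simp
  | a :: t, h => by
      simp only [List.map_cons, List.sum_cons, List.length_cons]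
      rw [sum_shift f g c t (fun x hx => h x (List.mem_cons_of_mem a hx)),
        h a (List.mem_cons_self)]
      push_cast
      ring

/-- Theorem 3(2) of the paper.  In the setting of Theorem 3(1), with
`D1 = Y i0 i1 + Y i1 i2 − Y i0 i2` and
`D2 = Y i0 i1 + Y i1 i2 + Y i3 i4 − Y i0 i2 − Y i3 i1 − Y i1 i4`:
if `D2 = 0` and `D1·(m2+2) ≤ S_{i1}(Φb) − S_{i1}(Φa)`, then `F(Φa) − F(Φb) ≤ 0`. -/
theorem delay_nonincrease_after_moving_one_aircraft
    (Y : ℕ → ℕ → ℝ) (P Sa Sb : ℕ → ℝ) (t0 : ℝ)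
    (φ1 φ2 φ3 : List ℕ) (i0 i1 i2 i3 i4 : ℕ)
    (Φa Φb : List ℕ)
    (hΦa : Φa = φ1 ++ [i0, i1, i2] ++ φ2 ++ [i3, i4] ++ φ3)
    (hΦb : Φb = φ1 ++ [i0, i2] ++ φ2 ++ [i3, i1, i4] ++ φ3)
    (hnodup : Φa.Nodup)
    (hchaina : Φa.Chain' (fun k l => Sa l = Sa k + Y k l))
    (hchainb : Φb.Chain' (fun k l => Sb l = Sb k + Y k l))
    (hfirst : ∀ z, Φa.head? = some z → Sa z = Sb z)
    (hP : ∀ z ∈ Φa, t0 < P z)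
    (hdelaya : ∀ z ∈ Φa, P z < Sa z)
    (hdelayb : ∀ z ∈ Φb, P z < Sb z)
    (hD2 : Y i0 i1 + Y i1 i2 + Y i3 i4 - Y i0 i2 - Y i3 i1 - Y i1 i4 = 0)
    (hD1 : (Y i0 i1 + Y i1 i2 - Y i0 i2) * ((φ2.length : ℝ) + 2) ≤ Sb i1 - Sa i1) :
    totalDelay Sa P Φa - totalDelay Sb P Φb ≤ 0 := by
  have hΦa' : Φa = (φ1 ++ [i0]) ++ ((i1 :: i2 :: (φ2 ++ [i3])) ++ (i4 :: φ3)) := by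
    rw [hΦa]; simp
  have hΦb' : Φb = (φ1 ++ [i0]) ++ ((i2 :: (φ2 ++ [i3])) ++ (i1 :: i4 :: φ3)) := by
    rw [hΦb]; simp
  rw [hΦa'] at hchaina
  unfold List.Chain' at hchaina
  rw [List.isChain_append] at hchaina
  obtain ⟨ha1, haR, halink01⟩ := hchaina
  rw [List.isChain_append] at haR
  obtain ⟨ha2, ha3, halink34⟩ := haR
  rw [hΦb'] at hchainb
  unfold List.Chain' at hchainb
  rw [List.isChain_append] at hchainb
  obtain ⟨hb1, hbR, hblink02⟩ := hchainb
  rw [List.isChain_append] at hbR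
  obtain ⟨hb2, hb3, hblink31⟩ := hbR
  -- extract individual relations
  rw [List.isChain_cons_cons] at ha2 hb3
  have hlast0 : (φ1 ++ [i0]).getLast? = some i0 := by simp
  have hlast3a : (i1 :: i2 :: (φ2 ++ [i3])).getLast? = some i3 := by
    have h : i1 :: i2 :: (φ2 ++ [i3]) = (i1 :: i2 :: φ2) ++ [i3] := by simp
    rw [h, List.getLast?_append]; rfl
  have hlast3b : (i2 :: (φ2 ++ [i3])).getLast? = some i3 := by
    have h : i2 :: (φ2 ++ [i3]) = (i2 :: φ2) ++ [i3] := by simp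
    rw [h, List.getLast?_append]; rfl
  have hR01 : Sa i1 = Sa i0 + Y i0 i1 := halink01 i0 (by rw [hlast0]; rfl) i1 rfl
  have hR02 : Sb i2 = Sb i0 + Y i0 i2 := hblink02 i0 (by rw [hlast0]; rfl) i2 rfl
  have hR34a : Sa i4 = Sa i3 + Y i3 i4 := halink34 i3 (by rw [hlast3a]; rfl) i4 rfl
  have hR31b : Sb i1 = Sb i3 + Y i3 i1 := hblink31 i3 (by rw [hlast3b]; rfl) i1 rfl
  have hR12a : Sa i2 = Sa i1 + Y i1 i2 := ha2.1
  have hR14b : Sb i4 = Sb i1 + Y i1 i4 := hb3.1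
  set c := Y i0 i1 + Y i1 i2 - Y i0 i2 with hc
  -- Sa = Sb on the common prefix φ1 ++ [i0]
  have hheadeq : Φa.head? = (φ1 ++ [i0]).head? := by
    rw [hΦa']; cases φ1 <;> simp
  have hpre : ∀ x ∈ φ1 ++ [i0], Sa x = Sb x + 0 :=
    offset_chain Y Sa Sb 0 _ ha1 hb1
      (by intro z hz; rw [add_zero]; exact hfirst z (by rw [hheadeq]; exact hz))
  have h0 : Sa i0 = Sb i0 := by
    have := hpre i0 (by simp); linarith
  -- offset c on i2 :: (φ2 ++ [i3])
  have hmid : ∀ x ∈ i2 :: (φ2 ++ [i3]), Sa x = Sb x + c :=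
    offset_chain Y Sa Sb c _ ha2.2 hb2
      (by intro z hz
          simp only [List.head?_cons, Option.some.injEq] at hz
          subst hz
          rw [hR12a, hR01, hR02, h0, hc]; ring)
  have h2 : Sa i2 = Sb i2 + c := hmid i2 (by simp)
  have h3 : Sa i3 = Sb i3 + c := hmid i3 (by simp)
  have h4 : Sa i4 = Sb i4 := by
    rw [hR34a, hR14b, hR31b, h3, hc]; linarith
  -- Sa = Sb on i4 :: φ3
  have hsuf : ∀ x ∈ i4 :: φ3, Sa x = Sb x + 0 :=
    offset_chain Y Sa Sb 0 _ ha3 hb3.2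
      (by intro z hz
          simp only [List.head?_cons, Option.some.injEq] at hz
          subst hz; rw [add_zero]; exact h4)
  -- rewrite total delays without max
  have ta : totalDelay Sa P Φa = (Φa.map fun x => Sa x - P x).sum := by
    unfold totalDelay
    congr 1
    apply List.map_congr_left
    intro x hx
    exact max_eq_left (by linarith [hdelaya x hx])
  have tb : totalDelay Sb P Φb = (Φb.map fun x => Sb x - P x).sum := by
    unfold totalDelay
    congr 1
    apply List.map_congr_left
    intro x hx
    exact max_eq_left (by linarith [hdelayb x hx])
  have s1 : (φ1.map fun x => Sa x - P x).sum
      = (φ1.map fun x => Sb x - P x).sum := by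
    apply congrArg
    apply List.map_congr_left
    intro x hx
    have := hpre x (List.mem_append_left _ hx); linarith
  have s2 : (φ2.map fun x => Sa x - P x).sum
      = (φ2.map fun x => Sb x - P x).sum + φ2.length * c :=
    sum_shift _ _ c φ2 (fun x hx => by
      have := hmid x (by simp [hx]); linarith)
  have s3 : (φ3.map fun x => Sa x - P x).sum
      = (φ3.map fun x => Sb x - P x).sum := by
    apply congrArg
    apply List.map_congr_left
    intro x hx
    have := hsuf x (by simp [hx]); linarith
  have hexp : c * ((φ2.length : ℝ) + 2) = (φ2.length : ℝ) * c + 2 * c := by ring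
  rw [ta, tb, hΦa', hΦb']
  simp only [List.map_append, List.sum_append, List.map_cons, List.sum_cons, List.map_nil, List.sum_nil]
  linarith [hD1, s1, s2, s3, h2, h3, h4, hexp]
end
end

section
/- Consider a class-monotonically-decreasing landing sequence Φ_a = ⟨Tcf_1, …, Tcf_n⟩ in which each aircraft other than the first is relevant to its leading aircraft, and suppose that in every sequence φ of these aircraft under consideration every aircraft is delayed: S_i(φ) > P_i > 0 for all i. Let E_1 = Y_{12} and E_i = Y_{(i−1)i} + Y_{i(i+1)} − Y_{(i−1)(i+1)} for i ∈ {2, …, n−1}. Generate a new sequence Φ_b by moving aircraft Tcf_{j_0} to be between Tcf_{k_0} and Tcf_{k_0+1} for some j_0 < k_0, keeping all other relative orders, where in Φ_b each aircraft other than the first is relevant to its leading aircraft and the operation time of the first aircraft is unchanged. If E_{j_0} = T_0, then F(Φ_b) ≥ F(Φ_a). -/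
noncomputable section

/-- The paper's landing separation assumptions (Assumptions 1-4), with classes `1,…,η`,
`ρ₁ = 3`, `ρ₂ = 5`: `T i j` is the minimum landing separation time between a leading
aircraft of class `i` and a trailing aircraft of class `j`. -/
structure LandingAssumptions (η : ℕ) (T : ℕ → ℕ → ℝ) (T0 δ : ℝ) : Prop where
  T0_pos : 0 < T0
  delta_lb : T0 / 8 < δ
  delta_ub : δ < T0 / 6
  eta_ge : 6 ≤ η
  diag12 : ∀ i, i = 1 ∨ i = 2 → T i i = 1.5 * T0
  diag35 : ∀ i, i = 3 ∨ i = 5 → T i i = T0 + δ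
  diag_other : ∀ i, 1 ≤ i → i ≤ η → i ≠ 1 → i ≠ 2 → i ≠ 3 → i ≠ 5 → T i i = T0
  T21 : T 2 1 = 1.5 * T0
  lower : ∀ i j, 1 ≤ j → j < i → i ≤ η → i ≠ 2 → T i j = T0
  mono : ∀ i k j, 1 ≤ i → i < k → k < j → j ≤ η →
    T i k ≤ T i j ∧ T i j ≤ 3 * T0 ∧ T k j < T i j
  tri : ∀ k j i, 1 ≤ k → k ≤ j → j ≤ i → i ≤ η →
    T i k < T i j + T j k ∧ T k i < T j i + T k j
  succ45 : T 4 5 = T0 + δ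
  succ_other : ∀ k, 2 ≤ k → k ≤ η → k ≠ 5 → 1.5 * T0 ≤ T (k - 1) k
  dec : ∀ i k, 2 ≤ i → i ≤ k → k ≤ η → ¬(i = 5 ∧ k = 5) → 2 * δ < T (i - 1) k - T i k
  T12 : 2 * T0 < T 1 2
  T23 : 1.5 * T0 + 2 * δ < T 2 3
  row1 : ∀ h j, 3 ≤ h → h ≤ j → j ≤ η → 0.5 * T0 < T 1 j - T h j
  row2E1 : 0.5 * T0 - δ ≤ T 2 4 - T 3 4 ∧ T 2 4 - T 3 4 < 0.5 * T0
  row2E2 : 0.5 * T0 - δ ≤ T 2 η - T 3 η ∧ T 2 η - T 3 η < 0.5 * T0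
  row2notE : ∀ k j, 2 < k → k < j → j ≤ η → ¬(k = 3 ∧ j = 4) → ¬(k = 3 ∧ j = η) →
    0.5 * T0 < T 2 j - T k j

namespace MovingFwdAux

variable {η : ℕ} {T : ℕ → ℕ → ℝ} {T0 δ : ℝ}

lemma delta_pos (hL : LandingAssumptions η T T0 δ) : 0 < δ := by
  have h1 := hL.T0_pos; have h2 := hL.delta_lb; linarith

lemma diag_ge (hL : LandingAssumptions η T T0 δ) (j : ℕ) (h1 : 1 ≤ j) (h2 : j ≤ η) :
    T0 ≤ T j j := by
  have hT0 := hL.T0_pos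
  have hδ := delta_pos hL
  rcases eq_or_ne j 1 with rfl | hj1
  · rw [hL.diag12 1 (Or.inl rfl)]; linarith
  rcases eq_or_ne j 2 with rfl | hj2
  · rw [hL.diag12 2 (Or.inr rfl)]; linarith
  rcases eq_or_ne j 3 with rfl | hj3
  · rw [hL.diag35 3 (Or.inl rfl)]; linarith
  rcases eq_or_ne j 5 with rfl | hj5
  · rw [hL.diag35 5 (Or.inr rfl)]; linarith
  · rw [hL.diag_other j h1 h2 hj1 hj2 hj3 hj5]

lemma succ_ge (hL : LandingAssumptions η T T0 δ) (j : ℕ) (h1 : 1 ≤ j) (h2 : j + 1 ≤ η) :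
    T0 + δ ≤ T j (j + 1) := by
  have hT0 := hL.T0_pos; have hub := hL.delta_ub
  rcases eq_or_ne j 4 with rfl | hj4
  · have h45 : T 4 5 = T0 + δ := hL.succ45
    norm_num [h45]
  · have h := hL.succ_other (j + 1) (by omega) h2 (by omega)
    have hj : j + 1 - 1 = j := by omega
    rw [hj] at h
    linarith

lemma diag_le_succ (hL : LandingAssumptions η T T0 δ) (j : ℕ) (h1 : 1 ≤ j) (h2 : j + 1 ≤ η) :
    T j j ≤ T j (j + 1) := by
  have hT0 := hL.T0_pos; have hub := hL.delta_ub; have hδ := delta_pos hL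
  have hs := succ_ge hL j h1 h2
  rcases eq_or_ne j 1 with rfl | hj1
  · rw [hL.diag12 1 (Or.inl rfl), show (1 : ℕ) + 1 = 2 from rfl]
    have := hL.T12; linarith
  rcases eq_or_ne j 2 with rfl | hj2
  · rw [hL.diag12 2 (Or.inr rfl), show (2 : ℕ) + 1 = 3 from rfl]
    have h := hL.succ_other 3 (by omega) (by omega) (by omega)
    norm_num at h ⊢
    linarith
  rcases eq_or_ne j 3 with rfl | hj3
  · rw [hL.diag35 3 (Or.inl rfl)]; exact hs
  rcases eq_or_ne j 5 with rfl | hj5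
  · rw [hL.diag35 5 (Or.inr rfl)]; exact hs
  · rw [hL.diag_other j h1 (by omega) hj1 hj2 hj3 hj5]; linarith

lemma diag_le (hL : LandingAssumptions η T T0 δ) (j i : ℕ) (h1 : 1 ≤ j) (hji : j ≤ i)
    (h2 : i ≤ η) : T j j ≤ T j i := by
  rcases eq_or_lt_of_le hji with rfl | hlt
  · exact le_rfl
  rcases eq_or_lt_of_le (Nat.succ_le_of_lt hlt) with heq | hlt'
  · rw [← heq]; exact diag_le_succ hL j h1 (by omega)
  · exact le_trans (diag_le_succ hL j h1 (by omega))
      ((hL.mono j (j + 1) i h1 (by omega) hlt' h2).1)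

lemma Tmin (hL : LandingAssumptions η T T0 δ) (i j : ℕ) (hi1 : 1 ≤ i) (hiη : i ≤ η)
    (hj1 : 1 ≤ j) (hjη : j ≤ η) : T0 ≤ T i j := by
  have hT0 := hL.T0_pos; have hδ := delta_pos hL; have hub := hL.delta_ub
  rcases lt_trichotomy i j with h | rfl | h
  · have hs := succ_ge hL i hi1 (by omega)
    rcases eq_or_lt_of_le (Nat.succ_le_of_lt h) with heq | hlt'
    · rw [← heq]; linarith
    · have := (hL.mono i (i + 1) j hi1 (by omega) hlt' hjη).1; linarith
  · exact diag_ge hL i hi1 hiη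
  · rcases eq_or_ne i 2 with rfl | hi2
    · have hj : j = 1 := by omega
      subst hj; rw [hL.T21]; linarith
    · rw [hL.lower i j hj1 h hiη hi2]

lemma T2_ge (hL : LandingAssumptions η T T0 δ) (i : ℕ) (h3 : 3 ≤ i) (hη : i ≤ η) :
    1.5 * T0 ≤ T 2 i := by
  have h23 := hL.T23; have hδ := delta_pos hL
  rcases eq_or_lt_of_le h3 with rfl | h
  · linarith
  · have := (hL.mono 2 3 i (by omega) (by omega) h hη).1; linarith

/-- The key inequality `T0 + T j k ≤ T j i + T i k` for `k ≤ j ≤ i`. -/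
lemma key (hL : LandingAssumptions η T T0 δ) (k j i : ℕ) (hk1 : 1 ≤ k) (hkj : k ≤ j)
    (hji : j ≤ i) (hiη : i ≤ η) : T0 + T j k ≤ T j i + T i k := by
  have hT0 := hL.T0_pos
  have hj1 : 1 ≤ j := le_trans hk1 hkj
  have hjη : j ≤ η := le_trans hji hiη
  rcases eq_or_lt_of_le hji with rfl | hji'
  · have := diag_ge hL j hj1 hiη; linarith
  rcases eq_or_lt_of_le hkj with rfl | hkj'
  · -- k = j case
    rcases eq_or_ne i 2 with rfl | hi2
    · have hj' : k = 1 := by omega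
      subst hj'
      rw [hL.T21, hL.diag12 1 (Or.inl rfl)]
      have := hL.T12; linarith
    · have hlow : T i k = T0 := hL.lower i k hk1 hji' hiη hi2
      have hdle : T k k ≤ T k i := diag_le hL k i hk1 (le_of_lt hji') hiη
      linarith
  · -- k < j < i
    rcases eq_or_ne j 2 with rfl | hj2
    · have hk' : k = 1 := by omega
      subst hk'
      rw [hL.T21]
      have hTi1 : T i 1 = T0 := hL.lower i 1 le_rfl (by omega) hiη (by omega)
      have h2i : 1.5 * T0 ≤ T 2 i := T2_ge hL i (by omega) hiη
      rw [hTi1]; linarith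
    · have h1 : T j k = T0 := hL.lower j k hk1 hkj' hjη hj2
      have h2 : T0 ≤ T i k := Tmin hL i k (by omega) hiη hk1 (by omega)
      have h3 : T0 ≤ T j i := Tmin hL j i hj1 hjη (by omega) hiη
      linarith

lemma sum_map_sub (f g : ℕ → ℝ) (l : List ℕ) :
    (l.map (fun z => f z - g z)).sum = (l.map f).sum - (l.map g).sum := by
  induction l with
  | nil => simp
  | cons a t ih => simp [ih]; ring

lemma sum_map_add_const (f : ℕ → ℝ) (d : ℝ) (l : List ℕ) :
    (l.map (fun z => f z + d)).sum = (l.map f).sum + l.length * d := by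
  induction l with
  | nil => simp
  | cons a t ih => simp [ih]; ring

lemma chain_shift {S S' : ℕ → ℝ} {Y : ℕ → ℕ → ℝ} {d : ℝ} :
    ∀ l : List ℕ, l.Chain' (fun u v => S v = S u + Y u v) →
      l.Chain' (fun u v => S' v = S' u + Y u v) →
      (∀ z, l.head? = some z → S' z = S z + d) →
      ∀ z ∈ l, S' z = S z + d
  | [] => by simp
  | [a] => by
      intro _ _ hh z hz
      simp only [List.mem_singleton] at hz
      subst hz
      exact hh z rfl
  | a :: b :: t => by
      intro h1 h2 hh z hz
      simp only [List.Chain'] at h1 h2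
      rw [List.isChain_cons_cons] at h1 h2
      have ha : S' a = S a + d := hh a rfl
      have hb : S' b = S b + d := by rw [h2.1, h1.1, ha]; ring
      rcases List.mem_cons.mp hz with rfl | hz'
      · exact ha
      · exact chain_shift (b :: t) h1.2 h2.2
          (by intro w hw; rw [List.head?_cons, Option.some_inj] at hw; subst hw; exact hb)
          z hz'

lemma chain_lb {S : ℕ → ℝ} {Y : ℕ → ℕ → ℝ} {T0 : ℝ} :
    ∀ (l : List ℕ) (a b : ℕ), (a :: (l ++ [b])).Chain' (fun u v => S v = S u + Y u v) →
      (∀ u ∈ a :: (l ++ [b]), ∀ v ∈ a :: (l ++ [b]), T0 ≤ Y u v) →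
      S a + (l.length + 1) * T0 ≤ S b
  | [], a, b => by
      intro h hb
      simp only [List.Chain'] at h
      rw [List.nil_append, List.isChain_cons_cons] at h
      have h1 := h.1
      have h2 := hb a (by simp) b (by simp)
      simp only [List.length_nil, Nat.cast_zero]
      rw [h1]; linarith
  | c :: t, a, b => by
      intro h hb
      simp only [List.Chain'] at h
      rw [List.cons_append, List.isChain_cons_cons] at h
      have h1 := h.1
      have h2 := hb a (by simp) c (by simp)
      have ih := chain_lb t c b h.2 (by
        intro u hu v hv
        exact hb u (by simp at hu ⊢; tauto) v (by simp at hv ⊢; tauto))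
      have hlen : ((c :: t).length : ℝ) = (t.length : ℝ) + 1 := by
        rw [List.length_cons]; push_cast; ring
      rw [hlen]
      rw [h1] at ih
      linarith

end MovingFwdAux

open MovingFwdAux in
/-- Theorem 4(1) of the paper.  `Φa = ⟨A, x, B, y, C⟩` is a
class-monotonically-decreasing landing sequence (aircraft `x` is `Tcf_{j0}`, aircraft `y`
is `Tcf_{k0}` with `j0 < k0`), in which each aircraft other than the first is relevant to
its leading aircraft, and `Φb = ⟨A, B, y, x, C⟩` is obtained by moving `x = Tcf_{j0}` to be
between `Tcf_{k0}` and `Tcf_{k0+1}`; both sequences start at time `t0` and every aircraft is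
delayed in both (`S > P > 0`).  For landing aircraft `Y u v = T (cl u) (cl v)`.
If `E_{j0} = T0`, where `E_1 = Y_{12}` and
`E_i = Y_{(i−1)i} + Y_{i(i+1)} − Y_{(i−1)(i+1)}` for `i ≥ 2`, then `F(Φb) ≥ F(Φa)`. -/
theorem moving_forward_in_monotone_landing_sequence
    (η : ℕ) (T : ℕ → ℕ → ℝ) (T0 δ t0 : ℝ)
    (hL : LandingAssumptions η T T0 δ)
    (cl : ℕ → ℕ) (P Sa Sb : ℕ → ℝ)
    (Y : ℕ → ℕ → ℝ) (hY : ∀ u v, Y u v = T (cl u) (cl v))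
    (A B C : List ℕ) (x y : ℕ)
    (Φa Φb : List ℕ)
    (hΦa : Φa = A ++ [x] ++ B ++ [y] ++ C)
    (hΦb : Φb = A ++ B ++ [y, x] ++ C)
    (hnodup : Φa.Nodup)
    (hclrange : ∀ z ∈ Φa, 1 ≤ cl z ∧ cl z ≤ η)
    (hdecr : Φa.Chain' (fun u v => cl v ≤ cl u))
    (hchaina : Φa.Chain' (fun u v => Sa v = Sa u + Y u v))
    (hchainb : Φb.Chain' (fun u v => Sb v = Sb u + Y u v))
    (hstarta : ∀ z, Φa.head? = some z → Sa z = t0)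
    (hstartb : ∀ z, Φb.head? = some z → Sb z = t0)
    (hdelay : ∀ z ∈ Φa, 0 < P z ∧ P z < Sa z ∧ P z < Sb z)
    (hE : (if A = [] then Y x ((B ++ [y]).headI)
           else Y A.getLastI x + Y x ((B ++ [y]).headI)
             - Y A.getLastI ((B ++ [y]).headI)) = T0) :
    totalDelay Sa P Φa ≤ totalDelay Sb P Φb := by
  classical
  have hT0 := hL.T0_pos
  set M : List ℕ := B ++ [y] with hMdef
  obtain ⟨m, Mt, hMc⟩ : ∃ m Mt, M = m :: Mt := by
    cases hB : B with
    | nil => exact ⟨y, [], by simp [hMdef, hB]⟩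
    | cons b Bt => exact ⟨b, Bt ++ [y], by simp [hMdef, hB]⟩
  have hmI : M.headI = m := by rw [hMc]; rfl
  have hyM : y ∈ M := by simp [hMdef]
  have hΦa' : Φa = A ++ ((x :: M) ++ C) := by rw [hΦa, hMdef]; simp
  have hΦb' : Φb = A ++ (M ++ (x :: C)) := by rw [hΦb, hMdef]; simp
  -- permutation
  have hperm : Φa.Perm Φb := by
    rw [hΦa, hΦb]
    have h1 : A ++ [x] ++ B ++ [y] ++ C = A ++ (([x] ++ (B ++ [y])) ++ C) := by simp
    have h2 : A ++ B ++ [y, x] ++ C = A ++ (((B ++ [y]) ++ [x]) ++ C) := by simp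
    rw [h1, h2]
    exact ((List.perm_append_comm).append_right C).append_left A
  -- memberships
  have hxΦa : x ∈ Φa := by rw [hΦa']; simp
  have hmemM : ∀ z ∈ M, z ∈ Φa := by intro z hz; rw [hΦa']; simp [hz]
  have hmemA : ∀ z ∈ A, z ∈ Φa := by intro z hz; rw [hΦa']; simp [hz]
  have hmemC : ∀ z ∈ C, z ∈ Φa := by intro z hz; rw [hΦa']; simp [hz]
  have hyΦa : y ∈ Φa := hmemM y hyM
  -- last of (x :: M) and of M is y
  have hlastxM : (x :: M).getLast? = some y := by
    rw [hMdef, show x :: (B ++ [y]) = (x :: B) ++ [y] by simp]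
    exact List.getLast?_concat
  have hlastM : M.getLast? = some y := by rw [hMdef]; exact List.getLast?_concat
  -- chain decompositions
  have hca := hchaina
  rw [hΦa'] at hca
  simp only [List.Chain'] at hca
  rw [List.isChain_append] at hca
  obtain ⟨hcaA, hca2, hlinkA⟩ := hca
  rw [List.isChain_append] at hca2
  obtain ⟨hcaXM, hcaC, hlinkC⟩ := hca2
  have hcb := hchainb
  rw [hΦb'] at hcb
  simp only [List.Chain'] at hcb
  rw [List.isChain_append] at hcb
  obtain ⟨hcbA, hcb2, hlinkA'⟩ := hcb
  rw [List.isChain_append] at hcb2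
  obtain ⟨hcbM, hcbXC, hlinkX⟩ := hcb2
  -- head facts
  have hheadXMC : ((x :: M) ++ C).head? = some x := rfl
  have hheadMXC : (M ++ (x :: C)).head? = some m := by rw [hMc]; rfl
  -- Ra x m
  have hRaxm : Sa m = Sa x + Y x m := by
    have := hcaXM
    rw [hMc, List.isChain_cons_cons] at this
    exact this.1
  -- Rb y x
  have hRbyx : Sb x = Sb y + Y y x := hlinkX y hlastM x rfl
  -- F1 : Sb = Sa on A
  have hF1 : ∀ z ∈ A, Sb z = Sa z + 0 := by
    rcases eq_or_ne A [] with hA | hA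
    · simp [hA]
    · obtain ⟨a, At, hA⟩ := List.exists_cons_of_ne_nil hA
      refine chain_shift A hcaA hcbA ?_
      intro w hw
      rw [hA, List.head?_cons, Option.some_inj] at hw
      subst hw
      have h1 : Sa a = t0 := hstarta a (by rw [hΦa', hA]; rfl)
      have h2 : Sb a = t0 := hstartb a (by rw [hΦb', hA]; rfl)
      rw [h1, h2]; ring
  -- F2 : Sb m = Sa m - T0
  have hF2 : Sb m = Sa m + (-T0) := by
    rcases eq_or_ne A [] with hA | hAne
    · rw [hA, if_pos rfl, hmI] at hE
      have hx : Sa x = t0 := hstarta x (by rw [hΦa', hA]; rfl)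
      have hmb : Sb m = t0 := hstartb m (by rw [hΦb', hA]; simpa using hheadMXC)
      rw [hmb, hRaxm, hx, hE]; ring
    · obtain ⟨g, hgl⟩ : ∃ g, A.getLast? = some g := by
        rw [List.getLast?_eq_getLast_of_ne_nil hAne]; exact ⟨_, rfl⟩
      have hgI : A.getLastI = g := by
        rw [List.getLastI_eq_getLast?, hgl]; rfl
      rw [if_neg hAne, hgI, hmI] at hE
      have hgmem : g ∈ A := by
        obtain ⟨h', he⟩ := List.mem_getLast?_eq_getLast (by rw [hgl]; rfl : g ∈ A.getLast?)
        rw [he]; exact List.getLast_mem h'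
      have hRagx : Sa x = Sa g + Y g x := hlinkA g hgl x hheadXMC
      have hRbgm : Sb m = Sb g + Y g m := hlinkA' g hgl m hheadMXC
      have hSbg : Sb g = Sa g + 0 := hF1 g hgmem
      rw [hRbgm, hSbg, hRaxm, hRagx]
      linarith
  -- F3 : Sb = Sa - T0 on M
  have hF3 : ∀ z ∈ M, Sb z = Sa z + (-T0) :=
    chain_shift M (by
        have := hcaXM.tail; simp at this; exact this)
      hcbM (by
        intro w hw
        rw [hMc, List.head?_cons, Option.some_inj] at hw
        subst hw; exact hF2)
  have hSby : Sb y = Sa y + (-T0) := hF3 y hyM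
  -- pairwise class facts
  haveI : IsTrans ℕ (fun u v => cl v ≤ cl u) := ⟨fun a b c h1 h2 => le_trans h2 h1⟩
  have hpw : Φa.Pairwise (fun u v => cl v ≤ cl u) := List.isChain_iff_pairwise.mp hdecr
  rw [hΦa', List.pairwise_append] at hpw
  obtain ⟨-, hpw2, -⟩ := hpw
  rw [List.pairwise_append] at hpw2
  obtain ⟨hpwXM, -, hXMC⟩ := hpw2
  have hyx : cl y ≤ cl x := (List.pairwise_cons.mp hpwXM).1 y hyM
  -- F5 : Sa y ≥ Sa x + (|B|+1) T0
  have hF5 : Sa x + ((B.length : ℝ) + 1) * T0 ≤ Sa y := by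
    have hchain : (x :: (B ++ [y])).Chain' (fun u v => Sa v = Sa u + Y u v) := hcaXM
    refine chain_lb B x y hchain ?_
    intro u hu v hv
    have hu' : u ∈ Φa := by
      rcases List.mem_cons.mp hu with rfl | h
      · exact hxΦa
      · exact hmemM u h
    have hv' : v ∈ Φa := by
      rcases List.mem_cons.mp hv with rfl | h
      · exact hxΦa
      · exact hmemM v h
    rw [hY]
    exact Tmin hL _ _ (hclrange u hu').1 (hclrange u hu').2 (hclrange v hv').1 (hclrange v hv').2
  -- F6 : T0 ≤ Y y x
  have hF6 : T0 ≤ Y y x := by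
    rw [hY]
    exact Tmin hL _ _ (hclrange y hyΦa).1 (hclrange y hyΦa).2 (hclrange x hxΦa).1
      (hclrange x hxΦa).2
  -- F7 : constant shift d ≥ 0 on C
  obtain ⟨d, hd0, hdC⟩ : ∃ d, 0 ≤ d ∧ ∀ z ∈ C, Sb z = Sa z + d := by
    rcases eq_or_ne C [] with hC | hCne
    · exact ⟨0, le_rfl, by simp [hC]⟩
    · obtain ⟨c, Ct, hC⟩ := List.exists_cons_of_ne_nil hCne
      have hcmem : c ∈ C := by rw [hC]; simp
      have hcΦa : c ∈ Φa := hmemC c hcmem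
      have hRayc : Sa c = Sa y + Y y c := hlinkC y hlastxM c (by rw [hC]; rfl)
      have hRbxc : Sb c = Sb x + Y x c := by
        have h := hcbXC
        rw [hC, List.isChain_cons_cons] at h
        exact h.1
      have hcy : cl c ≤ cl y := hXMC y (by simp [hyM]) c hcmem
      refine ⟨Y y x + Y x c - Y y c - T0, ?_, ?_⟩
      · have hk := key hL (cl c) (cl y) (cl x) (hclrange c hcΦa).1 hcy hyx
          (hclrange x hxΦa).2
        rw [hY y x, hY x c, hY y c]
        linarith
      · refine chain_shift C hcaC hcbXC.tail ?_
        intro w hw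
        rw [hC, List.head?_cons, Option.some_inj] at hw
        subst hw
        rw [hRbxc, hRbyx, hSby, hRayc]
        ring
  -- reduce totalDelay to sums
  have hTa : totalDelay Sa P Φa = (Φa.map Sa).sum - (Φa.map P).sum := by
    unfold totalDelay
    rw [← sum_map_sub]
    congr 1
    apply List.map_congr_left
    intro z hz
    obtain ⟨h1, h2, h3⟩ := hdelay z hz
    rw [max_eq_left (by linarith)]
  have hTb : totalDelay Sb P Φb = (Φb.map Sb).sum - (Φb.map P).sum := by
    unfold totalDelay
    rw [← sum_map_sub]
    congr 1
    apply List.map_congr_left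
    intro z hz
    obtain ⟨h1, h2, h3⟩ := hdelay z (hperm.mem_iff.mpr hz)
    rw [max_eq_left (by linarith)]
  have hpermP : (Φa.map P).sum = (Φb.map P).sum := (hperm.map P).sum_eq
  rw [hTa, hTb, ← hpermP]
  have hmain : (Φa.map Sa).sum ≤ (Φb.map Sb).sum := by
    rw [hΦa', hΦb']
    simp only [List.map_append, List.sum_append, List.map_cons, List.sum_cons]
    have eA : (A.map Sb).sum = (A.map Sa).sum := by
      have : A.map Sb = A.map (fun z => Sa z + 0) := List.map_congr_left hF1
      rw [this, sum_map_add_const]; simp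
    have eM : (M.map Sb).sum = (M.map Sa).sum + M.length * (-T0) := by
      have : M.map Sb = M.map (fun z => Sa z + (-T0)) := List.map_congr_left hF3
      rw [this, sum_map_add_const]
    have eC : (C.map Sb).sum = (C.map Sa).sum + C.length * d := by
      have : C.map Sb = C.map (fun z => Sa z + d) := List.map_congr_left hdC
      rw [this, sum_map_add_const]
    have hlenM : (M.length : ℝ) = (B.length : ℝ) + 1 := by
      rw [hMdef, List.length_append, List.length_singleton]; push_cast; ring
    have hCd : 0 ≤ (C.length : ℝ) * d := mul_nonneg (Nat.cast_nonneg _) hd0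
    rw [eA, eM, eC, hlenM]
    have hSbx : Sa x + ((B.length : ℝ) + 1) * T0 ≤ Sb x := by
      rw [hRbyx, hSby]
      linarith
    linarith
  linarith
end
end

section
/- Consider a class-monotonically-decreasing landing sequence Φ_a = ⟨Tcf_1, …, Tcf_n⟩ in which each aircraft other than the first is relevant to its leading aircraft and the first aircraft operates at time t_0. Suppose that in every ordering φ of these aircraft with a feasible schedule every aircraft is delayed: S_i(φ) > P_i > 0 for all i, and suppose that Y_{k(k+1)} ≤ Y_{(k+1)(k+2)} for all k ∈ {1, …, n−2} (separations between consecutive aircraft of Φ_a are nondecreasing along the sequence). Then (Φ_a, Sr(Φ_a)) is an optimal solution of the total-delay minimization problem: F(Φ_a) ≤ F(φ, Sr(φ)) for every ordering φ of the same aircraft and every feasible schedule Sr(φ) (i.e., S_j(φ) − S_i(φ) ≥ Y_{ij} for all pairs i before j in φ, and S_i(φ) ≥ t_0 for all i). -/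
noncomputable section

namespace MLSO

open List
open scoped Classical

variable {Y : ℕ → ℕ → ℝ}

def seps (Y : ℕ → ℕ → ℝ) : List ℕ → List ℝ
  | [] => []
  | [_] => []
  | u :: v :: t => Y u v :: seps Y (v :: t)

@[simp] lemma seps_nil : seps Y [] = ([] : List ℝ) := rfl
@[simp] lemma seps_one (u : ℕ) : seps Y [u] = ([] : List ℝ) := rfl
@[simp] lemma seps_cons (u v : ℕ) (t : List ℕ) :
    seps Y (u :: v :: t) = Y u v :: seps Y (v :: t) := rfl

lemma seps_length : ∀ (l : List ℕ), (seps Y l).length + 1 = max l.length 1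
  | [] => rfl
  | [_] => rfl
  | u :: v :: t => by
      have h := seps_length (v :: t)
      simp only [seps_cons, List.length_cons] at h ⊢
      omega

def cntP (p : ℕ → ℕ → Prop) : List ℕ → ℕ
  | [] => 0
  | [_] => 0
  | u :: v :: t => (if p u v then 1 else 0) + cntP p (v :: t)

@[simp] lemma cntP_nil (p) : cntP p [] = 0 := rfl
@[simp] lemma cntP_one (p) (u : ℕ) : cntP p [u] = 0 := rfl
@[simp] lemma cntP_cons (p) (u v : ℕ) (t : List ℕ) :
    cntP p (u :: v :: t) = (if p u v then 1 else 0) + cntP p (v :: t) := rfl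

def cntE (q : ℕ → Prop) : List ℕ → ℕ
  | [] => 0
  | u :: t => (if q u then 1 else 0) + cntE q t

@[simp] lemma cntE_nil (q) : cntE q [] = 0 := rfl
@[simp] lemma cntE_cons (q) (u : ℕ) (t : List ℕ) :
    cntE q (u :: t) = (if q u then 1 else 0) + cntE q t := rfl

def cntR (q : ℝ → Prop) : List ℝ → ℕ
  | [] => 0
  | x :: t => (if q x then 1 else 0) + cntR q t

@[simp] lemma cntR_nil (q) : cntR q [] = 0 := rfl
@[simp] lemma cntR_cons (q) (x : ℝ) (t : List ℝ) :
    cntR q (x :: t) = (if q x then 1 else 0) + cntR q t := rfl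

def headB (q : ℕ → Prop) : List ℕ → ℕ
  | [] => 0
  | x :: _ => if q x then 1 else 0

@[simp] lemma headB_nil (q) : headB q [] = 0 := rfl
@[simp] lemma headB_cons (q) (x : ℕ) (t : List ℕ) :
    headB q (x :: t) = if q x then 1 else 0 := rfl

def lastB (q : ℕ → Prop) : List ℕ → ℕ
  | [] => 0
  | [x] => if q x then 1 else 0
  | _ :: y :: t => lastB q (y :: t)

@[simp] lemma lastB_nil (q) : lastB q [] = 0 := rfl
@[simp] lemma lastB_one (q) (x : ℕ) : lastB q [x] = if q x then 1 else 0 := rfl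
@[simp] lemma lastB_cons (q) (x y : ℕ) (t : List ℕ) :
    lastB q (x :: y :: t) = lastB q (y :: t) := rfl

def fLB : ℝ → List ℝ → ℝ
  | t, [] => t
  | t, s :: sl => t + fLB (t + s) sl

@[simp] lemma fLB_nil (t : ℝ) : fLB t [] = t := rfl
@[simp] lemma fLB_cons (t s : ℝ) (sl : List ℝ) : fLB t (s :: sl) = t + fLB (t + s) sl := rfl


section Arith

variable {η : ℕ} {T : ℕ → ℕ → ℝ} {T0 δ : ℝ} (hL : LandingAssumptions η T T0 δ)
include hL

lemma delta_pos : 0 < δ := by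
  have := hL.T0_pos; have := hL.delta_lb; linarith

lemma delta_lt_half : δ < 0.5 * T0 := by
  have := hL.T0_pos; have := hL.delta_ub; linarith

/-- classification of separations when the trailing class is no larger. -/
lemma desc_cases {i j : ℕ} (h1 : 1 ≤ j) (hji : j ≤ i) (hiη : i ≤ η) :
    ((i = 1 ∨ i = 2) ∧ T i j = 1.5 * T0)
  ∨ (i = j ∧ (i = 3 ∨ i = 5) ∧ T i j = T0 + δ)
  ∨ (T i j = T0) := by
  by_cases hi1 : i = 1
  · subst hi1
    have : j = 1 := by omega
    subst this
    exact Or.inl ⟨Or.inl rfl, hL.diag12 1 (Or.inl rfl)⟩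
  by_cases hi2 : i = 2
  · subst hi2
    have : j = 1 ∨ j = 2 := by omega
    rcases this with h | h <;> subst h
    · exact Or.inl ⟨Or.inr rfl, hL.T21⟩
    · exact Or.inl ⟨Or.inr rfl, hL.diag12 2 (Or.inr rfl)⟩
  rcases eq_or_lt_of_le hji with heq | hlt
  · subst heq
    by_cases h35 : j = 3 ∨ j = 5
    · exact Or.inr (Or.inl ⟨rfl, h35, hL.diag35 j h35⟩)
    · push_neg at h35
      exact Or.inr (Or.inr (hL.diag_other j h1 hiη hi1 hi2 h35.1 h35.2))
  · exact Or.inr (Or.inr (hL.lower i j h1 hlt hiη hi2))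

/-- ascending separations are at least `T0 + δ`. -/
lemma asc_ge {i j : ℕ} (h1 : 1 ≤ i) (hij : i < j) (hη : j ≤ η) : T0 + δ ≤ T i j := by
  have hbase : T0 + δ ≤ T i (i + 1) := by
    by_cases h5 : i + 1 = 5
    · have : i = 4 := by omega
      subst this
      rw [hL.succ45]
    · have h := hL.succ_other (i + 1) (by omega) (by omega) h5
      simp only [Nat.add_sub_cancel] at h
      have := hL.T0_pos; have := hL.delta_ub
      linarith
  rcases eq_or_lt_of_le (Nat.succ_le_of_lt hij) with heq | hlt
  · have hj : j = i + 1 := by omega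
    subst hj; exact hbase
  · have h := (hL.mono i (i + 1) j h1 (by omega) hlt hη).1
    linarith

/-- ascending separations other than (4,5) are at least `1.5 T0`. -/
lemma asc_big {i j : ℕ} (h1 : 1 ≤ i) (hij : i < j) (hη : j ≤ η)
    (hne : ¬(i = 4 ∧ j = 5)) : 1.5 * T0 ≤ T i j := by
  by_cases h5 : i + 1 = 5
  · -- i = 4
    have hi4 : i = 4 := by omega
    subst hi4
    have hj6 : 6 ≤ j := by omega
    have h56 : 1.5 * T0 ≤ T 5 6 := by
      have h := hL.succ_other 6 (by omega) (by omega) (by omega)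
      simpa using h
    have h5j : T 5 6 ≤ T 5 j := by
      rcases eq_or_lt_of_le hj6 with heq | hlt
      · rw [heq]
      · exact (hL.mono 5 6 j (by omega) (by omega) hlt hη).1
    have h4j : T 5 j < T 4 j := (hL.mono 4 5 j (by omega) (by omega) (by omega) hη).2.2
    linarith
  · have hbase : 1.5 * T0 ≤ T i (i + 1) := by
      have h := hL.succ_other (i + 1) (by omega) (by omega) h5
      simpa using h
    rcases eq_or_lt_of_le (Nat.succ_le_of_lt hij) with heq | hlt
    · have hj : j = i + 1 := by omega
      subst hj; exact hbase
    · have h := (hL.mono i (i + 1) j h1 (by omega) hlt hη).1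
      linarith

/-- separations with leading class 1 or 2 are at least `1.5 T0`. -/
lemma src12_big {i j : ℕ} (hi : i = 1 ∨ i = 2) (hj : 1 ≤ j) (hη : j ≤ η) :
    1.5 * T0 ≤ T i j := by
  have hT0 := hL.T0_pos
  rcases hi with hi | hi <;> subst hi
  · -- i = 1
    rcases Nat.lt_or_ge j 2 with h | h
    · have : j = 1 := by omega
      subst this
      rw [hL.diag12 1 (Or.inl rfl)]
    · have h12 : 1.5 * T0 ≤ T 1 2 := by have := hL.T12; linarith
      rcases eq_or_lt_of_le h with heq | hlt
      · rw [← heq]; exact h12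
      · have := (hL.mono 1 2 j (by omega) (by omega) hlt hη).1
        linarith
  · -- i = 2
    rcases Nat.lt_or_ge j 3 with h | h
    · have : j = 1 ∨ j = 2 := by omega
      rcases this with h | h <;> subst h
      · rw [hL.T21]
      · rw [hL.diag12 2 (Or.inr rfl)]
    · have hd := delta_pos hL
      have h23 : 1.5 * T0 ≤ T 2 3 := by have := hL.T23; linarith
      rcases eq_or_lt_of_le h with heq | hlt
      · rw [← heq]; exact h23
      · have := (hL.mono 2 3 j (by omega) (by omega) hlt hη).1
        linarith

/-- values in `[T0+δ, 1.5 T0)` come from the pair (4,5) or equal special classes. -/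
lemma mid_cheap {i j : ℕ} (h1i : 1 ≤ i) (hiη : i ≤ η) (h1j : 1 ≤ j) (hjη : j ≤ η)
    (hg : T0 + δ ≤ T i j) (hb : T i j < 1.5 * T0) :
    (i = 4 ∧ j = 5) ∨ (i = j ∧ (j = 3 ∨ j = 5)) := by
  have hd := delta_pos hL
  have hT0 := hL.T0_pos
  rcases Nat.lt_or_ge i j with hij | hji
  · by_cases h45 : i = 4 ∧ j = 5
    · exact Or.inl h45
    · exact absurd (asc_big hL h1i hij hjη h45) (by linarith)
  · rcases desc_cases hL h1j hji hiη with ⟨_, hv⟩ | ⟨he, h35, hv⟩ | hv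
    · rw [hv] at hb; linarith
    · exact Or.inr ⟨he, by omega⟩
    · rw [hv] at hg; linarith

lemma all_ge_T0 {i j : ℕ} (h1i : 1 ≤ i) (hiη : i ≤ η) (h1j : 1 ≤ j) (hjη : j ≤ η) :
    T0 ≤ T i j := by
  have hd := delta_pos hL
  have hT0 := hL.T0_pos
  rcases Nat.lt_or_ge i j with hij | hji
  · have := asc_ge hL h1i hij hjη; linarith
  · rcases desc_cases hL h1j hji hiη with ⟨_, hv⟩ | ⟨_, _, hv⟩ | hv <;> rw [hv] <;> linarith

end Arith


section Lists

lemma cntE_perm (q : ℕ → Prop) {l l' : List ℕ} (h : l.Perm l') : cntE q l = cntE q l' := by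
  induction h with
  | nil => rfl
  | cons x _ ih => simp [ih]
  | swap x y l => simp; omega
  | trans _ _ ih1 ih2 => rw [ih1, ih2]

lemma cntE_eq_length (q : ℕ → Prop) : ∀ l : List ℕ, (∀ z ∈ l, q z) → cntE q l = l.length
  | [], _ => rfl
  | x :: t, h => by
      have := cntE_eq_length q t (fun z hz => h z (List.mem_cons_of_mem x hz))
      simp [this, if_pos (h x (List.mem_cons_self))]
      omega

lemma cntP_le_len (p : ℕ → ℕ → Prop) : ∀ (x : ℕ) (t : List ℕ), cntP p (x :: t) ≤ t.length
  | x, [] => le_refl 0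
  | x, y :: t => by
      have := cntP_le_len p y t
      simp only [cntP_cons, List.length_cons]
      split_ifs <;> omega

lemma cntR_le_length (q : ℝ → Prop) : ∀ L : List ℝ, cntR q L ≤ L.length
  | [] => le_refl 0
  | x :: t => by
      have := cntR_le_length q t
      simp only [cntR_cons, List.length_cons]
      split_ifs <;> omega

lemma cntR_eq_length (q : ℝ → Prop) : ∀ L : List ℝ, (∀ z ∈ L, q z) → cntR q L = L.length
  | [], _ => rfl
  | x :: t, h => by
      have := cntR_eq_length q t (fun z hz => h z (List.mem_cons_of_mem x hz))
      simp [this, if_pos (h x (List.mem_cons_self))]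
      omega

lemma cntR_append (q : ℝ → Prop) : ∀ (a b : List ℝ), cntR q (a ++ b) = cntR q a + cntR q b
  | [], b => by simp
  | x :: t, b => by simp [cntR_append q t b]; omega

lemma cntP_split (p q r : ℕ → ℕ → Prop) :
    ∀ l : List ℕ, (∀ u v, u ∈ l → v ∈ l → p u v → q u v ∨ r u v) →
      cntP p l ≤ cntP q l + cntP r l
  | [], _ => le_refl 0
  | [x], _ => le_refl 0
  | x :: y :: t, h => by
      have ih := cntP_split p q r (y :: t)
        (fun u v hu hv => h u v (List.mem_cons_of_mem x hu) (List.mem_cons_of_mem x hv))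
      simp only [cntP_cons]
      by_cases hp : p x y
      · rcases h x y (List.mem_cons_self) (List.mem_cons_of_mem x (List.mem_cons_self)) hp
          with hq | hr
        · simp only [if_pos hp, if_pos hq]; omega
        · simp only [if_pos hp, if_pos hr]; split_ifs <;> omega
      · simp only [if_neg hp]; split_ifs <;> omega

lemma lastB_le_one (q : ℕ → Prop) : ∀ l : List ℕ, lastB q l ≤ 1
  | [] => by simp
  | [x] => by simp; split_ifs <;> omega
  | x :: y :: t => by simp [lastB_le_one q (y :: t)]

lemma exists_of_lastB (q : ℕ → Prop) : ∀ l : List ℕ, 1 ≤ lastB q l → ∃ z ∈ l, q z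
  | [x], h => by
      by_cases hq : q x
      · exact ⟨x, by simp, hq⟩
      · simp [lastB_one, if_neg hq] at h
  | x :: y :: t, h => by
      obtain ⟨z, hz, hq⟩ := exists_of_lastB q (y :: t) (by simpa using h)
      exact ⟨z, List.mem_cons_of_mem x hz, hq⟩

lemma cntR_take_le (q : ℝ → Prop) (L : List ℝ) (j : ℕ) :
    cntR q L = cntR q (L.take j) + cntR q (L.drop j) := by
  conv_lhs => rw [← List.take_append_drop j L]
  exact cntR_append q _ _

def gsum (sl : List ℝ) : ℝ := ∑ j ∈ Finset.range (sl.length + 1), (sl.take j).sum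

lemma gsum_cons (s : ℝ) (sl : List ℝ) :
    gsum (s :: sl) = (sl.length + 1) * s + gsum sl := by
  unfold gsum
  rw [List.length_cons, Finset.sum_range_succ']
  simp only [List.take_succ_cons, List.sum_cons, List.take_zero, List.sum_nil, add_zero]
  rw [Finset.sum_add_distrib, Finset.sum_const, Finset.card_range]
  push_cast
  ring

lemma fLB_eq : ∀ (sl : List ℝ) (t : ℝ), fLB t sl = (sl.length + 1) * t + gsum sl
  | [], t => by simp [gsum]
  | s :: sl, t => by
      rw [fLB_cons, fLB_eq sl (t + s), gsum_cons]
      simp only [List.length_cons]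
      push_cast
      ring

lemma fLB_mono (t : ℝ) (A B : List ℝ) (hlen : A.length = B.length)
    (h : ∀ j, (A.take j).sum ≤ (B.take j).sum) : fLB t A ≤ fLB t B := by
  rw [fLB_eq, fLB_eq, hlen]
  have hg : gsum A ≤ gsum B := by
    unfold gsum
    rw [hlen]
    exact Finset.sum_le_sum (fun j _ => h j)
  linarith

lemma sum_map_sub (g h : ℕ → ℝ) : ∀ l : List ℕ,
    (l.map (fun x => g x - h x)).sum = (l.map g).sum - (l.map h).sum
  | [] => by simp
  | x :: t => by simp [sum_map_sub g h t]; ring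

lemma sum_two_valued {T0 c : ℝ} (hc : 0 < c) :
    ∀ L : List ℝ, (∀ a ∈ L, a = T0 ∨ a = T0 + c) →
      L.sum = T0 * L.length + c * cntR (fun x => T0 + c ≤ x) L
  | [], _ => by simp
  | a :: t, h => by
      have ih := sum_two_valued hc t (fun x hx => h x (List.mem_cons_of_mem a hx))
      rcases h a (List.mem_cons_self) with ha | ha
      · rw [List.sum_cons, ih, ha]
        simp only [cntR_cons, if_neg (show ¬ T0 + c ≤ T0 by linarith), List.length_cons]
        push_cast; ring
      · rw [List.sum_cons, ih, ha]
        simp only [cntR_cons, if_pos (le_refl (T0 + c)), List.length_cons]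
        push_cast; ring

lemma sum_lb {T0 c : ℝ} (hc : 0 ≤ c) :
    ∀ L : List ℝ, (∀ b ∈ L, T0 ≤ b) →
      T0 * L.length + c * cntR (fun x => T0 + c ≤ x) L ≤ L.sum
  | [], _ => by simp
  | b :: t, h => by
      have ih := sum_lb hc t (fun x hx => h x (List.mem_cons_of_mem b hx))
      have hb := h b (List.mem_cons_self)
      by_cases hbc : T0 + c ≤ b
      · simp only [cntR_cons, if_pos hbc, List.sum_cons, List.length_cons]
        push_cast; linarith
      · simp only [cntR_cons, if_neg hbc, List.sum_cons, List.length_cons]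
        push_cast; linarith

lemma sortcnt {T0 c : ℝ} (hc : 0 < c) :
    ∀ (L : List ℝ) (j : ℕ), L.Pairwise (· ≤ ·) → (∀ a ∈ L, a = T0 ∨ a = T0 + c) →
      cntR (fun x => T0 + c ≤ x) (L.take j) + L.length ≤ j + cntR (fun x => T0 + c ≤ x) L
      ∨ cntR (fun x => T0 + c ≤ x) (L.take j) = 0
  | L, 0, _, _ => by simp
  | [], j, _, _ => by simp
  | a :: t, j + 1, hs, hv => by
      rcases hv a (List.mem_cons_self) with ha | ha
      · -- a = T0
        have ih := sortcnt hc t j (List.pairwise_cons.1 hs).2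
          (fun x hx => hv x (List.mem_cons_of_mem _ hx))
        simp only [List.take_succ_cons, cntR_cons, ha,
          if_neg (show ¬ T0 + c ≤ T0 by linarith), List.length_cons, zero_add]
        omega
      · -- a = T0 + c : all elements are big
        left
        have hall : ∀ b ∈ a :: t, T0 + c ≤ b := by
          intro b hb
          rcases List.mem_cons.1 hb with rfl | hb
          · rw [ha]
          · exact le_trans (ha ▸ le_refl _) ((List.pairwise_cons.1 hs).1 b hb)
        have h1 : cntR (fun x => T0 + c ≤ x) (a :: t) = t.length + 1 := by
          have := cntR_eq_length (fun x => T0 + c ≤ x) (a :: t) hall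
          simpa using this
        have h2 : cntR (fun x => T0 + c ≤ x) ((a :: t).take (j + 1)) ≤ j + 1 :=
          le_trans (cntR_le_length _ _) (by simpa using List.length_take_le (j+1) _)
        simp only [List.length_cons]
        omega

lemma analytic {T0 c : ℝ} (hc : 0 < c) (A B : List ℝ) (hlen : A.length = B.length)
    (hA : ∀ a ∈ A, a = T0 ∨ a = T0 + c) (hAs : A.Pairwise (· ≤ ·))
    (hB : ∀ b ∈ B, T0 ≤ b)
    (hcnt : cntR (fun x => T0 + c ≤ x) A ≤ cntR (fun x => T0 + c ≤ x) B) :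
    ∀ j : ℕ, (A.take j).sum ≤ (B.take j).sum := by
  intro j
  have hbig : cntR (fun x => T0 + c ≤ x) (A.take j) ≤ cntR (fun x => T0 + c ≤ x) (B.take j) := by
    by_cases hj : A.length ≤ j
    · rw [List.take_of_length_le hj, List.take_of_length_le (by omega)]
      exact hcnt
    · have hsplitB := cntR_take_le (fun x => T0 + c ≤ x) B j
      have hdropB : cntR (fun x => T0 + c ≤ x) (B.drop j) ≤ B.length - j :=
        le_trans (cntR_le_length _ _) (by simp)
      rcases sortcnt hc A j hAs hA with h | h
      · omega
      · omega
  have hsA := sum_two_valued hc (A.take j) (fun a ha => hA a (List.mem_of_mem_take ha))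
  have hsB := sum_lb (le_of_lt hc) (B.take j) (fun b hb => hB b (List.mem_of_mem_take hb))
  have hlent : (A.take j).length = (B.take j).length := by simp [hlen]
  rw [hsA]
  refine le_trans ?_ hsB
  rw [hlent]
  have hcast : (cntR (fun x => T0 + c ≤ x) (A.take j) : ℝ)
      ≤ (cntR (fun x => T0 + c ≤ x) (B.take j) : ℝ) := Nat.cast_le.2 hbig
  nlinarith [hc.le]

end Lists


section Comb

variable {η : ℕ} {T : ℕ → ℕ → ℝ} {T0 δ : ℝ} {cl : ℕ → ℕ} {Y : ℕ → ℕ → ℝ}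
variable (hL : LandingAssumptions η T T0 δ) (hY : ∀ u v, Y u v = T (cl u) (cl v))
include hL hY

/-- φ-side invariant for a single special class `c ∈ {3,5}`. -/
lemma inv_c (c : ℕ) (hc : c = 3 ∨ c = 5) :
    ∀ l : List ℕ, (∀ z ∈ l, 1 ≤ cl z ∧ cl z ≤ η) →
      cntE (fun z => cl z = c) l
        ≤ cntP (fun u v => T0 + δ ≤ Y u v) l + headB (fun z => c ≤ cl z) l
  | [] => fun _ => by simp
  | [x] => fun _ => by
      simp only [cntE_cons, cntE_nil, cntP_one, headB_cons, add_zero, zero_add]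
      by_cases h : cl x = c
      · rw [if_pos h, if_pos (by omega)]
      · rw [if_neg h]; omega
  | x :: y :: t => fun hr => by
      have ih := inv_c c hc (y :: t) (fun z hz => hr z (List.mem_cons_of_mem x hz))
      have hrx := hr x (List.mem_cons_self)
      have hry := hr y (List.mem_cons_of_mem x (List.mem_cons_self))
      simp only [cntE_cons, cntP_cons, headB_cons] at ih ⊢
      by_cases hyc : c ≤ cl y
      · rw [if_pos hyc] at ih
        by_cases hxc : cl x = c
        · have hgood : T0 + δ ≤ Y x y := by
            rcases eq_or_lt_of_le hyc with he2 | hlt2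
            · rw [hY, hxc, ← he2, hL.diag35 c hc]
            · rw [hY]
              exact asc_ge hL (by omega) (by omega) hry.2
          rw [if_pos hxc, if_pos hgood, if_pos (show c ≤ cl x by omega)]
          omega
        · by_cases hcx : c ≤ cl x
          · rw [if_neg hxc, if_pos hcx]
            omega
          · have hgood : T0 + δ ≤ Y x y := by
              rw [hY]
              exact asc_ge hL hrx.1 (by omega) hry.2
            rw [if_neg hxc, if_neg hcx, if_pos hgood]
            omega
      · rw [if_neg hyc] at ih
        by_cases hxc : cl x = c
        · rw [if_pos hxc, if_pos (show c ≤ cl x by omega)]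
          omega
        · rw [if_neg hxc]
          omega

/-- φ-side invariant for case B. -/
lemma invB :
    ∀ l : List ℕ, (∀ z ∈ l, 1 ≤ cl z ∧ cl z ≤ η) →
      cntE (fun z => cl z = 1 ∨ cl z = 2) l
        + cntP (fun u v => (cl u = 4 ∧ cl v = 5) ∨ (cl u = cl v ∧ (cl v = 3 ∨ cl v = 5))) l
      ≤ cntP (fun u v => T0 + δ ≤ Y u v) l + lastB (fun z => cl z = 1 ∨ cl z = 2) l
  | [] => fun _ => by simp
  | [x] => fun _ => by simp
  | x :: y :: t => fun hr => by
      have ih := invB (y :: t) (fun z hz => hr z (List.mem_cons_of_mem x hz))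
      have hrx := hr x (List.mem_cons_self)
      have hry := hr y (List.mem_cons_of_mem x (List.mem_cons_self))
      simp only [cntE_cons, cntP_cons, lastB_cons] at ih ⊢
      by_cases h12 : cl x = 1 ∨ cl x = 2
      · have hgood : T0 + δ ≤ Y x y := by
          rw [hY]
          have h1 := src12_big hL h12 hry.1 hry.2
          have h2 := delta_lt_half hL
          linarith
        have hnc : ¬ ((cl x = 4 ∧ cl y = 5) ∨ (cl x = cl y ∧ (cl y = 3 ∨ cl y = 5))) := by
          omega
        rw [if_pos h12, if_neg hnc, if_pos hgood]
        omega
      · by_cases hch2 : (cl x = 4 ∧ cl y = 5) ∨ (cl x = cl y ∧ (cl y = 3 ∨ cl y = 5))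
        · have hgood : T0 + δ ≤ Y x y := by
            rw [hY]
            rcases hch2 with ⟨h4, h5⟩ | ⟨he, h35⟩
            · rw [h4, h5, hL.succ45]
            · rw [he, hL.diag35 (cl y) h35]
          rw [if_neg h12, if_pos hch2, if_pos hgood]
          omega
        · rw [if_neg h12, if_neg hch2]
          omega

/-- Φa-side invariant: big separations are counted by class-1/2 aircraft. -/
lemma invR :
    ∀ l : List ℕ, l.Chain' (fun u v => cl v ≤ cl u) → (∀ z ∈ l, 1 ≤ cl z ∧ cl z ≤ η) →
      cntP (fun u v => 1.5 * T0 ≤ Y u v) l + lastB (fun z => cl z = 1 ∨ cl z = 2) l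
        ≤ cntE (fun z => cl z = 1 ∨ cl z = 2) l
  | [] => fun _ _ => by simp
  | [x] => fun _ _ => by simp
  | x :: y :: t => fun hch hr => by
      have hcc := List.isChain_cons_cons.1 hch
      have ih := invR (y :: t) hcc.2 (fun z hz => hr z (List.mem_cons_of_mem x hz))
      have hrx := hr x (List.mem_cons_self)
      have hry := hr y (List.mem_cons_of_mem x (List.mem_cons_self))
      simp only [cntP_cons, lastB_cons, cntE_cons] at ih ⊢
      by_cases h12 : cl x = 1 ∨ cl x = 2
      · rw [if_pos h12]
        by_cases hb : 1.5 * T0 ≤ Y x y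
        · rw [if_pos hb]; omega
        · rw [if_neg hb]; omega
      · have hnb : ¬ (1.5 * T0 ≤ Y x y) := by
          rw [hY]
          have hT0 := hL.T0_pos
          have hd := delta_lt_half hL
          rcases desc_cases hL hry.1 hcc.1 hrx.2 with ⟨h, _⟩ | ⟨_, _, hv⟩ | hv
          · exact absurd h h12
          · rw [hv]; intro hcon; linarith
          · rw [hv]; intro hcon; linarith
        rw [if_neg hnb, if_neg h12]
        omega

/-- once an equal-special separation occurs, classes and separations stay constant. -/
lemma prop35 :
    ∀ (t : List ℕ) (x : ℕ), (x :: t).Chain' (fun u v => cl v ≤ cl u) →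
      (∀ z ∈ x :: t, 1 ≤ cl z ∧ cl z ≤ η) → (cl x = 3 ∨ cl x = 5) →
      (∀ v ∈ seps Y (x :: t), T0 + δ ≤ v) →
      (∀ z ∈ x :: t, cl z = cl x) ∧ (∀ v ∈ seps Y (x :: t), v = T0 + δ)
  | [], x => fun _ _ _ _ => ⟨by simp, by simp⟩
  | y :: t, x => fun hch hr h35 hsep => by
      have hcc := List.isChain_cons_cons.1 hch
      have hrx := hr x (List.mem_cons_self)
      have hry := hr y (List.mem_cons_of_mem x (List.mem_cons_self))
      have hv := hsep (Y x y) (by simp)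
      have hd := delta_pos hL
      have heq : cl y = cl x ∧ Y x y = T0 + δ := by
        rw [hY] at hv ⊢
        rcases desc_cases hL hry.1 hcc.1 hrx.2 with ⟨h, _⟩ | ⟨he, _, hval⟩ | hval
        · constructor
          · omega
          · omega
        · exact ⟨he.symm, hval⟩
        · rw [hval] at hv; linarith
      have ih := prop35 t y hcc.2 (fun z hz => hr z (List.mem_cons_of_mem x hz))
        (by rw [heq.1]; exact h35)
        (fun v hv' => hsep v (by simp [hv']))
      refine ⟨?_, ?_⟩
      · intro z hz
        rcases List.mem_cons.1 hz with rfl | hz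
        · rfl
        · rw [ih.1 z hz, heq.1]
      · intro v hv'
        rcases List.mem_cons.1 hv' with rfl | hv'
        · exact heq.2
        · exact ih.2 v hv'

/-- the Φa-side structure lemma in case A. -/
lemma tailA :
    ∀ l : List ℕ, l.Chain' (fun u v => cl v ≤ cl u) → (∀ z ∈ l, 1 ≤ cl z ∧ cl z ≤ η) →
      (seps Y l).Pairwise (· ≤ ·) → (∀ v ∈ seps Y l, v < 1.5 * T0) →
      cntP (fun u v => T0 + δ ≤ Y u v) l = 0
      ∨ ∃ c, (c = 3 ∨ c = 5) ∧
          cntP (fun u v => T0 + δ ≤ Y u v) l + 1 ≤ cntE (fun z => cl z = c) l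
  | [] => fun _ _ _ _ => Or.inl rfl
  | [x] => fun _ _ _ _ => Or.inl rfl
  | x :: y :: t => fun hch hr hpw hlt => by
      have hcc := List.isChain_cons_cons.1 hch
      have hrx := hr x (List.mem_cons_self)
      have hry := hr y (List.mem_cons_of_mem x (List.mem_cons_self))
      have hd := delta_pos hL
      by_cases hg : T0 + δ ≤ Y x y
      · -- head step is special; the whole list is constant of class cl x
        have h35 : cl x = 3 ∨ cl x = 5 := by
          have hvlt := hlt (Y x y) (by simp)
          rw [hY] at hg hvlt
          rcases desc_cases hL hry.1 hcc.1 hrx.2 with ⟨_, hval⟩ | ⟨_, h, _⟩ | hval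
          · rw [hval] at hvlt; linarith
          · exact h
          · rw [hval] at hg; linarith
        have hall : ∀ v ∈ seps Y (x :: y :: t), T0 + δ ≤ v := by
          intro v hv
          rcases List.mem_cons.1 hv with rfl | hv
          · exact hg
          · exact le_trans hg ((List.pairwise_cons.1 hpw).1 v hv)
        have hprop := prop35 hL hY (y :: t) x hch hr h35 hall
        refine Or.inr ⟨cl x, h35, ?_⟩
        have h1 : cntE (fun z => cl z = cl x) (x :: y :: t) = t.length + 2 := by
          have := cntE_eq_length (fun z => cl z = cl x) (x :: y :: t) hprop.1
          simpa using this
        have h2 := cntP_le_len (fun u v => T0 + δ ≤ Y u v) x (y :: t)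
        simp only [List.length_cons] at h2
        omega
      · have ih := tailA (y :: t) hcc.2 (fun z hz => hr z (List.mem_cons_of_mem x hz))
          (List.pairwise_cons.1 hpw).2 (fun v hv => hlt v (by simp [hv]))
        rcases ih with h0 | ⟨c, hc, hcnt⟩
        · left
          simp only [cntP_cons]
          rw [if_neg hg]
          omega
        · refine Or.inr ⟨c, hc, ?_⟩
          rw [cntP_cons, cntE_cons]
          rw [if_neg hg]
          omega

/-- in a sorted separation list containing `T0 + δ`, every value is at most `T0 + δ`. -/
lemma excl :
    ∀ l : List ℕ, l.Chain' (fun u v => cl v ≤ cl u) → (∀ z ∈ l, 1 ≤ cl z ∧ cl z ≤ η) →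
      (seps Y l).Pairwise (· ≤ ·) → (T0 + δ) ∈ seps Y l →
      ∀ v ∈ seps Y l, v ≤ T0 + δ
  | [] => fun _ _ _ h => by simp at h
  | [x] => fun _ _ _ h => by simp at h
  | x :: y :: t => fun hch hr hpw hmem => by
      have hcc := List.isChain_cons_cons.1 hch
      have hrx := hr x (List.mem_cons_self)
      have hry := hr y (List.mem_cons_of_mem x (List.mem_cons_self))
      have hd := delta_pos hL
      have hdh := delta_lt_half hL
      have hT0 := hL.T0_pos
      rcases List.mem_cons.1 hmem with heq | hmem'
      · -- head is T0 + δ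
        have h35 : cl x = 3 ∨ cl x = 5 := by
          rw [hY] at heq
          rcases desc_cases hL hry.1 hcc.1 hrx.2 with ⟨_, hval⟩ | ⟨_, h, _⟩ | hval
          · rw [hval] at heq; linarith
          · exact h
          · rw [hval] at heq; linarith
        have hall : ∀ v ∈ seps Y (x :: y :: t), T0 + δ ≤ v := by
          intro v hv
          rcases List.mem_cons.1 hv with rfl | hv
          · exact le_of_eq heq
          · exact le_trans (le_of_eq heq) ((List.pairwise_cons.1 hpw).1 v hv)
        have hprop := prop35 hL hY (y :: t) x hch hr h35 hall
        intro v hv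
        exact le_of_eq (hprop.2 v hv)
      · have ih := excl (y :: t) hcc.2 (fun z hz => hr z (List.mem_cons_of_mem x hz))
          (List.pairwise_cons.1 hpw).2 hmem'
        intro v hv
        rcases List.mem_cons.1 hv with rfl | hv
        · exact le_trans ((List.pairwise_cons.1 hpw).1 _ hmem') (ih _ hmem')
        · exact ih v hv

/-- values of separations along a class-monotonically-decreasing list. -/
lemma eyvals :
    ∀ l : List ℕ, l.Chain' (fun u v => cl v ≤ cl u) → (∀ z ∈ l, 1 ≤ cl z ∧ cl z ≤ η) →
      ∀ v ∈ seps Y l, v = T0 ∨ v = T0 + δ ∨ v = 1.5 * T0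
  | [] => fun _ _ v hv => by simp at hv
  | [x] => fun _ _ v hv => by simp at hv
  | x :: y :: t => fun hch hr v hv => by
      have hcc := List.isChain_cons_cons.1 hch
      have hrx := hr x (List.mem_cons_self)
      have hry := hr y (List.mem_cons_of_mem x (List.mem_cons_self))
      rcases List.mem_cons.1 hv with rfl | hv'
      · rw [hY]
        rcases desc_cases hL hry.1 hcc.1 hrx.2 with ⟨_, hval⟩ | ⟨_, _, hval⟩ | hval
        · exact Or.inr (Or.inr hval)
        · exact Or.inr (Or.inl hval)
        · exact Or.inl hval
      · exact eyvals (y :: t) hcc.2 (fun z hz => hr z (List.mem_cons_of_mem x hz)) v hv'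

/-- all separations are at least `T0`. -/
lemma zge :
    ∀ l : List ℕ, (∀ z ∈ l, 1 ≤ cl z ∧ cl z ≤ η) → ∀ v ∈ seps Y l, T0 ≤ v
  | [] => fun _ v hv => by simp at hv
  | [x] => fun _ v hv => by simp at hv
  | x :: y :: t => fun hr v hv => by
      have hrx := hr x (List.mem_cons_self)
      have hry := hr y (List.mem_cons_of_mem x (List.mem_cons_self))
      rcases List.mem_cons.1 hv with rfl | hv'
      · rw [hY]
        exact all_ge_T0 hL hrx.1 hrx.2 hry.1 hry.2
      · exact zge (y :: t) (fun z hz => hr z (List.mem_cons_of_mem x hz)) v hv'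

end Comb

section Last

variable {cl : ℕ → ℕ}

/-- the last element of a class-monotonically-decreasing list is of class 1 or 2
whenever some element is. -/
lemma lastB_is12_of_mem :
    ∀ l : List ℕ, l.Chain' (fun u v => cl v ≤ cl u) → (∀ z ∈ l, 1 ≤ cl z) →
      ∀ z ∈ l, cl z ≤ 2 → lastB (fun w => cl w = 1 ∨ cl w = 2) l = 1
  | [] => fun _ _ z hz _ => by simp at hz
  | [x] => fun _ h1 z hz hle => by
      have hzx : z = x := by simpa using hz
      subst hzx
      have := h1 z (by simp)
      simp only [lastB_one]
      rw [if_pos (by omega)]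
  | x :: y :: t => fun hch h1 z hz hle => by
      have hcc := List.isChain_cons_cons.1 hch
      have ih := lastB_is12_of_mem (y :: t) hcc.2
        (fun w hw => h1 w (List.mem_cons_of_mem x hw))
      rcases List.mem_cons.1 hz with rfl | hz'
      · rw [lastB_cons]
        exact ih y (List.mem_cons_self) (by omega)
      · rw [lastB_cons]
        exact ih z hz' hle

end Last



section SortSums

variable {Y : ℕ → ℕ → ℝ} {S : ℕ → ℝ}

lemma sortsep :
    ∀ (l A : List ℕ),
      (∀ (A' B : List ℕ) (u v w : ℕ), A ++ l = A' ++ [u, v, w] ++ B → Y u v ≤ Y v w) →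
      (seps Y l).Chain' (· ≤ ·)
  | [], _, _ => List.isChain_nil
  | [x], _, _ => List.isChain_nil
  | [x, y], _, _ => List.isChain_singleton _
  | u :: v :: w :: t, A, h => by
      have tail := sortsep (v :: w :: t) (A ++ [u])
        (fun A' B a b c hd => h A' B a b c (by rw [← hd]; simp))
      have head : Y u v ≤ Y v w := h A t u v w (by simp)
      simp only [seps_cons] at tail ⊢
      exact List.isChain_cons_cons.2 ⟨head, tail⟩

lemma sum_ge_fLB :
    ∀ (l : List ℕ) (x : ℕ) (t : ℝ), (x :: l).Chain' (fun u v => Y u v ≤ S v - S u) →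
      t ≤ S x → fLB t (seps Y (x :: l)) ≤ ((x :: l).map S).sum
  | [], x, t, _, ht => by simpa using ht
  | y :: l, x, t, hch, ht => by
      have hcc := List.isChain_cons_cons.1 hch
      have ih := sum_ge_fLB l y (t + Y x y) hcc.2 (by linarith [hcc.1])
      simp only [seps_cons, fLB_cons, List.map_cons, List.sum_cons] at ih ⊢
      linarith

lemma sum_eq_fLB {Sa : ℕ → ℝ} :
    ∀ (l : List ℕ) (x : ℕ), (x :: l).Chain' (fun u v => Sa v = Sa u + Y u v) →
      ((x :: l).map Sa).sum = fLB (Sa x) (seps Y (x :: l))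
  | [], x, _ => by simp
  | y :: l, x, hch => by
      have hcc := List.isChain_cons_cons.1 hch
      have ih := sum_eq_fLB l y hcc.2
      simp only [seps_cons, fLB_cons, List.map_cons, List.sum_cons] at ih ⊢
      rw [← hcc.1, ← ih]

lemma cntR_seps (q : ℝ → Prop) :
    ∀ l : List ℕ, cntR q (seps Y l) = cntP (fun u v => q (Y u v)) l
  | [] => rfl
  | [x] => rfl
  | x :: y :: t => by simp [cntR_seps q (y :: t)]

end SortSums

end MLSO

/-- Theorem 4(2) of the paper.  `Φa` is a class-monotonically-decreasing
landing sequence in which each aircraft other than the first is relevant to its leading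
aircraft and the first aircraft operates at time `t0`.  If in every ordering of these
aircraft with a feasible schedule every aircraft is delayed (`S z > P z > 0`), and the
separations between consecutive aircraft of `Φa` are nondecreasing along the sequence
(`Y_{k(k+1)} ≤ Y_{(k+1)(k+2)}`), then `(Φa, Sr(Φa))` is an optimal solution of the
total-delay minimization problem: `F(Φa) ≤ F(φ, Sr(φ))` for every ordering `φ` of the same
aircraft with a feasible schedule (`S j − S i ≥ Y i j` for `i` before `j`, and `S ≥ t0`). -/
theorem monotone_landing_sequence_is_optimal
    (η : ℕ) (T : ℕ → ℕ → ℝ) (T0 δ t0 : ℝ)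
    (hL : LandingAssumptions η T T0 δ)
    (cl : ℕ → ℕ) (P Sa : ℕ → ℝ)
    (Y : ℕ → ℕ → ℝ) (hY : ∀ u v, Y u v = T (cl u) (cl v))
    (Φa : List ℕ) (hne : Φa ≠ [])
    (hnodup : Φa.Nodup)
    (hclrange : ∀ z ∈ Φa, 1 ≤ cl z ∧ cl z ≤ η)
    (hdecr : Φa.Chain' (fun u v => cl v ≤ cl u))
    (hchaina : Φa.Chain' (fun u v => Sa v = Sa u + Y u v))
    (hfeasa : Φa.Pairwise (fun u v => Y u v ≤ Sa v - Sa u))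
    (hwina : ∀ z ∈ Φa, t0 ≤ Sa z)
    (hstarta : ∀ z, Φa.head? = some z → Sa z = t0)
    (hYmono : ∀ A B u v w, Φa = A ++ [u, v, w] ++ B → Y u v ≤ Y v w)
    (hPpos : ∀ z ∈ Φa, 0 < P z)
    (hdelay : ∀ (φ : List ℕ) (S : ℕ → ℝ), φ.Perm Φa →
        φ.Pairwise (fun u v => Y u v ≤ S v - S u) → (∀ z ∈ φ, t0 ≤ S z) →
        ∀ z ∈ φ, P z < S z) :
    ∀ (φ : List ℕ) (S : ℕ → ℝ), φ.Perm Φa →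
      φ.Pairwise (fun u v => Y u v ≤ S v - S u) → (∀ z ∈ φ, t0 ≤ S z) →
      totalDelay Sa P Φa ≤ totalDelay S P φ := by
  intro φ S hperm hfeas hS0
  have hφne : φ ≠ [] := by
    intro h
    apply hne
    have hl := hperm.length_eq
    rw [h] at hl
    exact List.length_eq_zero_iff.1 hl.symm
  have hclφ : ∀ z ∈ φ, 1 ≤ cl z ∧ cl z ≤ η := fun z hz => hclrange z (hperm.subset hz)
  -- every aircraft is delayed in both schedules
  have hdelΦ := hdelay Φa Sa (List.Perm.refl _) hfeasa hwina
  have hdelφ := hdelay φ S hperm hfeas hS0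
  -- total delay as difference of sums
  have htd1 : totalDelay Sa P Φa = (Φa.map Sa).sum - (Φa.map P).sum := by
    unfold totalDelay
    rw [← MLSO.sum_map_sub Sa P Φa]
    congr 1
    apply List.map_congr_left
    intro z hz
    have := hdelΦ z hz
    rw [max_eq_left (by linarith)]
  have htd2 : totalDelay S P φ = (φ.map S).sum - (φ.map P).sum := by
    unfold totalDelay
    rw [← MLSO.sum_map_sub S P φ]
    congr 1
    apply List.map_congr_left
    intro z hz
    have := hdelφ z hz
    rw [max_eq_left (by linarith)]
  have hP : (φ.map P).sum = (Φa.map P).sum := List.Perm.sum_eq (hperm.map P)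
  -- destruct the lists
  obtain ⟨xa, la, rfl⟩ := List.exists_cons_of_ne_nil hne
  obtain ⟨xf, lf, rfl⟩ := List.exists_cons_of_ne_nil hφne
  -- lower bound functional descriptions
  have hSa_head : Sa xa = t0 := hstarta xa (by simp)
  have hB2 : ((xa :: la).map Sa).sum = MLSO.fLB t0 (MLSO.seps Y (xa :: la)) := by
    rw [← hSa_head]
    exact MLSO.sum_eq_fLB la xa hchaina
  have hchainS : (xf :: lf).Chain' (fun u v => Y u v ≤ S v - S u) := hfeas.isChain
  have hB1 : MLSO.fLB t0 (MLSO.seps Y (xf :: lf)) ≤ ((xf :: lf).map S).sum :=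
    MLSO.sum_ge_fLB lf xf t0 hchainS (hS0 xf (by simp))
  -- lengths of the separation lists agree
  have hlensep : (MLSO.seps Y (xa :: la)).length = (MLSO.seps Y (xf :: lf)).length := by
    have h1 := MLSO.seps_length (Y := Y) (xa :: la)
    have h2 := MLSO.seps_length (Y := Y) (xf :: lf)
    have h3 := hperm.length_eq
    simp only [List.length_cons] at h1 h2 h3
    omega
  -- sortedness of the Φa separations
  have hsorted : (MLSO.seps Y (xa :: la)).Pairwise (· ≤ ·) := by
    have hchain : (MLSO.seps Y (xa :: la)).Chain' (· ≤ ·) :=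
      MLSO.sortsep (xa :: la) []
        (fun A' B u v w h => hYmono A' B u v w (by simpa using h))
    exact List.isChain_iff_pairwise.1 hchain
  have hzgeT0 : ∀ v ∈ MLSO.seps Y (xf :: lf), T0 ≤ v :=
    MLSO.zge hL hY (xf :: lf) hclφ
  have heyvals := MLSO.eyvals hL hY (xa :: la) hdecr hclrange
  have hd0 := MLSO.delta_pos hL
  have hdh := MLSO.delta_lt_half hL
  have hT0 := hL.T0_pos
  -- the key prefix-domination inequality
  have hkey : ∀ j : ℕ, ((MLSO.seps Y (xa :: la)).take j).sum
      ≤ ((MLSO.seps Y (xf :: lf)).take j).sum := by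
    by_cases hcase : ∀ v ∈ MLSO.seps Y (xa :: la), v < 1.5 * T0
    · -- Case A : no big separation in Φa
      refine MLSO.analytic (c := δ) hd0 _ _ hlensep ?_ hsorted hzgeT0 ?_
      · intro a ha
        rcases heyvals a ha with h | h | h
        · exact Or.inl h
        · exact Or.inr h
        · exact absurd (h ▸ hcase a ha) (lt_irrefl _)
      · rw [MLSO.cntR_seps, MLSO.cntR_seps]
        rcases MLSO.tailA hL hY (xa :: la) hdecr hclrange hsorted hcase with h0 | ⟨c, hc, hcnt⟩
        · rw [h0]; omega
        · have hpermE : MLSO.cntE (fun z => cl z = c) (xa :: la)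
              = MLSO.cntE (fun z => cl z = c) (xf :: lf) :=
            MLSO.cntE_perm _ hperm.symm
          have hinv := MLSO.inv_c hL hY c hc (xf :: lf) hclφ
          have hhb : MLSO.headB (fun z => c ≤ cl z) (xf :: lf) ≤ 1 := by
            simp only [MLSO.headB_cons]
            split_ifs <;> omega
          omega
    · -- Case B : some big separation in Φa
      push_neg at hcase
      obtain ⟨v0, hv0m, hv0⟩ := hcase
      have hnottd : (T0 + δ) ∉ MLSO.seps Y (xa :: la) := by
        intro hmem
        have := MLSO.excl hL hY (xa :: la) hdecr hclrange hsorted hmem v0 hv0m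
        linarith
      have h15 : T0 + 0.5 * T0 = 1.5 * T0 := by ring
      refine MLSO.analytic (c := 0.5 * T0) (by linarith) _ _ hlensep ?_ hsorted hzgeT0 ?_
      · intro a ha
        rcases heyvals a ha with h | h | h
        · exact Or.inl h
        · exact absurd (h ▸ ha) hnottd
        · right; rw [h, h15]
      · simp only [h15]
        rw [MLSO.cntR_seps, MLSO.cntR_seps]
        have hI3 := MLSO.invR hL hY (xa :: la) hdecr hclrange
        have hI2 := MLSO.invB hL hY (xf :: lf) hclφ
        have hsplit := MLSO.cntP_split (fun u v => T0 + δ ≤ Y u v)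
          (fun u v => 1.5 * T0 ≤ Y u v)
          (fun u v => (cl u = 4 ∧ cl v = 5) ∨ (cl u = cl v ∧ (cl v = 3 ∨ cl v = 5)))
          (xf :: lf) ?_
        · have hE : MLSO.cntE (fun z => cl z = 1 ∨ cl z = 2) (xa :: la)
              = MLSO.cntE (fun z => cl z = 1 ∨ cl z = 2) (xf :: lf) :=
            MLSO.cntE_perm _ hperm.symm
          have hlast : MLSO.lastB (fun z => cl z = 1 ∨ cl z = 2) (xf :: lf)
              ≤ MLSO.lastB (fun z => cl z = 1 ∨ cl z = 2) (xa :: la) := by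
            rcases Nat.lt_or_ge (MLSO.lastB (fun z => cl z = 1 ∨ cl z = 2) (xf :: lf)) 1
              with h | h
            · omega
            · obtain ⟨z, hz, hq⟩ := MLSO.exists_of_lastB _ _ h
              have h1 : MLSO.lastB (fun z => cl z = 1 ∨ cl z = 2) (xa :: la) = 1 :=
                MLSO.lastB_is12_of_mem (xa :: la) hdecr
                  (fun w hw => (hclrange w hw).1) z (hperm.subset hz) (by omega)
              have h2 := MLSO.lastB_le_one (fun z => cl z = 1 ∨ cl z = 2) (xf :: lf)
              omega
          omega
        · intro u v hu hv hp
          by_cases hb : 1.5 * T0 ≤ Y u v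
          · exact Or.inl hb
          · refine Or.inr ?_
            have hru := hclφ u hu
            have hrv := hclφ v hv
            rw [hY] at hp hb
            push_neg at hb
            exact MLSO.mid_cheap hL hru.1 hru.2 hrv.1 hrv.2 hp hb
  have hmid : MLSO.fLB t0 (MLSO.seps Y (xa :: la)) ≤ MLSO.fLB t0 (MLSO.seps Y (xf :: lf)) :=
    MLSO.fLB_mono t0 _ _ hlensep hkey
  rw [htd1, htd2]
  have hSsum : ((xa :: la).map Sa).sum ≤ ((xf :: lf).map S).sum := by
    rw [hB2]
    exact le_trans hmid hB1
  linarith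
end
end

section
/- Let Φ_a = ⟨φ_1, φ_2⟩ be a landing sequence, where φ_1 = ⟨Tcf_1, …, Tcf_{n_1}⟩ and φ_2 = ⟨Tcf_{n_1+1}, …, Tcf_{n_2}⟩ are both class-monotonically-decreasing and cl_{n_1} < cl_{n_1+1}. Let Φ_b be a class-monotonically-decreasing sequence obtained by merging the aircraft of φ_1 and φ_2. Suppose that in both Φ_a and Φ_b each aircraft other than the first is relevant to its leading aircraft, the first aircraft of each sequence operates at the same initial time t_0, and every aircraft is delayed in both sequences: S_i(Φ_a) > P_i > 0 and S_i(Φ_b) > P_i > 0 for all i. If cl_{n_1} = ρ_2 − 1, cl_{n_1+1} = ρ_2, and cl_i = ρ_2 for some i ∈ {1, …, n_1−1}, then F(Φ_a) < F(Φ_b). -/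
noncomputable section

def Gc (T : ℕ → ℕ → ℝ) : List ℕ → ℝ
  | [] => 0
  | [_] => 0
  | (x :: y :: r) => ((y :: r).length : ℝ) * T x y + Gc T (y :: r)

theorem Gc_cons (T : ℕ → ℕ → ℝ) (x : ℕ) (l : List ℕ) (hl : l ≠ []) :
    Gc T (x :: l) = (l.length : ℝ) * T x l.headI + Gc T l := by
  cases l with
  | nil => simp at hl
  | cons y r => rfl

theorem chainSum (T : ℕ → ℕ → ℝ) (cl : ℕ → ℕ) (S : ℕ → ℝ) :
    ∀ (l : List ℕ) (t : ℝ), l.Chain' (fun u v => S v = S u + T (cl u) (cl v)) →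
      (∀ z, l.head? = some z → S z = t) →
      (l.map S).sum = l.length * t + Gc T (l.map cl) := by
  intro l
  induction l with
  | nil => intro t _ _; simp [Gc]
  | cons x r ih =>
    intro t hc hh
    have hx : S x = t := hh x rfl
    cases r with
    | nil => simp [Gc, hx]
    | cons y q =>
      have hc' := (List.isChain_cons_cons.mp hc)
      have hyx : S y = t + T (cl x) (cl y) := by rw [hc'.1, hx]
      have := ih (t + T (cl x) (cl y)) hc'.2 (by intro z hz; simp at hz; rw [← hz]; exact hyx)
      have hg := Gc_cons T (cl x) (List.map cl (y :: q)) (by simp)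
      simp only [List.map_cons, List.sum_cons] at this hg ⊢
      rw [hx, hg, this]
      simp only [List.length_cons, List.headI, List.length_map, Nat.cast_add, Nat.cast_one]
      ring

theorem Gc_rep (T : ℕ → ℕ → ℝ) (c : ℕ) : ∀ (j : ℕ) (l : List ℕ),
    Gc T (List.replicate (j+1) c ++ l) =
      ((j : ℝ) * l.length + j*(j+1)/2) * T c c + (l.length : ℝ) * T c l.headI + Gc T l := by
  intro j
  induction j with
  | zero =>
    intro l
    cases l with
    | nil => simp [Gc]
    | cons y r => simp [Gc_cons, Gc]
  | succ j ih =>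
    intro l
    have h1 : List.replicate (j+2) c ++ l = c :: (List.replicate (j+1) c ++ l) := by
      simp [List.replicate_succ]
    rw [h1, Gc_cons T c _ (by simp), ih]
    have hh : (List.replicate (j+1) c ++ l).headI = c := by
      simp [List.replicate_succ]
    rw [hh]
    simp only [List.length_append, List.length_replicate, Nat.cast_add, Nat.cast_one]
    ring

theorem Gc_append_lt (T : ℕ → ℕ → ℝ) (l1 l2 : List ℕ)
    (hlen : l1.length = l2.length) (hhd : l1.headI = l2.headI) (h1 : l1 ≠ []) (h2 : l2 ≠ [])
    (hlt : Gc T l1 < Gc T l2) : ∀ (A : List ℕ), Gc T (A ++ l1) < Gc T (A ++ l2) := by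
  intro A
  induction A with
  | nil => simpa using hlt
  | cons a A ih =>
    have e1 : (A ++ l1) ≠ [] := by simp [h1]
    have e2 : (A ++ l2) ≠ [] := by simp [h2]
    rw [List.cons_append, List.cons_append, Gc_cons T a _ e1, Gc_cons T a _ e2]
    have hlen' : (A ++ l1).length = (A ++ l2).length := by simp [hlen]
    have hhd' : (A ++ l1).headI = (A ++ l2).headI := by
      cases A with
      | nil => simpa using hhd
      | cons b B => simp
    rw [hlen', hhd']
    linarith [ih]

theorem Gc_core (T : ℕ → ℕ → ℝ) (T0 δ : ℝ) (hδ : 0 < δ)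
    (h55 : T 5 5 = T0 + δ) (h44 : T 4 4 = T0) (h54 : T 5 4 = T0) (h45 : T 4 5 = T0 + δ)
    (R : List ℕ) (hR : R = [] ∨ (T 5 R.headI = T0 ∧ T 4 R.headI = T0))
    (a b c : ℕ) :
    Gc T (List.replicate (a+1) 5 ++ (List.replicate (b+1) 4 ++ (List.replicate (c+1) 5 ++ R)))
      < Gc T (List.replicate (a+c+2) 5 ++ (List.replicate (b+1) 4 ++ R)) := by
  have hd4 : ∀ (l : List ℕ) (j : ℕ), (List.replicate (j+1) 4 ++ l).headI = 4 := by
    intro l j; simp [List.replicate_succ]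
  have hd5 : ∀ (l : List ℕ) (j : ℕ), (List.replicate (j+1) 5 ++ l).headI = 5 := by
    intro l j; simp [List.replicate_succ]
  have e2 : a + c + 2 = (a + c + 1) + 1 := by omega
  rw [e2, Gc_rep, Gc_rep, Gc_rep, Gc_rep, Gc_rep, hd4, hd5, hd4]
  rw [h55, h44, h54, h45]
  have hT5R : (R.length : ℝ) * T 5 R.headI = (R.length : ℝ) * T0 := by
    rcases hR with h | ⟨h1, h2⟩
    · simp [h]
    · rw [h1]
  have hT4R : (R.length : ℝ) * T 4 R.headI = (R.length : ℝ) * T0 := by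
    rcases hR with h | ⟨h1, h2⟩
    · simp [h]
    · rw [h2]
  rw [hT5R, hT4R]
  simp only [List.length_append, List.length_replicate, Nat.cast_add, Nat.cast_one]
  have key : (0:ℝ) < δ * ((b:ℝ)+1) * ((c:ℝ)+1) := by positivity
  nlinarith [key]

theorem split_filter (t : ℕ) : ∀ (l : List ℕ), l.Pairwise (fun a b => b ≤ a) →
    l = l.filter (fun c => decide (t ≤ c)) ++ l.filter (fun c => decide (c < t)) := by
  intro l
  induction l with
  | nil => simp
  | cons x xs ih =>
    intro h
    have hp := List.pairwise_cons.mp h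
    by_cases hx : t ≤ x
    · have h1 : List.filter (fun c => decide (t ≤ c)) (x :: xs)
          = x :: List.filter (fun c => decide (t ≤ c)) xs := by
        simp [List.filter_cons, hx]
      have h2 : List.filter (fun c => decide (c < t)) (x :: xs)
          = List.filter (fun c => decide (c < t)) xs := by
        simp [List.filter_cons, hx, Nat.not_lt.mpr hx]
      rw [h1, h2, List.cons_append, ← ih hp.2]
    · have hall : ∀ c ∈ xs, c < t := fun c hc =>
        lt_of_le_of_lt (hp.1 c hc) (Nat.not_le.mp hx)
      have h1 : List.filter (fun c => decide (t ≤ c)) (x :: xs) = [] := by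
        rw [List.filter_eq_nil_iff]
        intro c hc
        simp only [decide_eq_true_eq, Nat.not_le]
        rcases List.mem_cons.mp hc with rfl | hc
        · exact Nat.not_le.mp hx
        · exact hall c hc
      have h2 : List.filter (fun c => decide (c < t)) (x :: xs) = x :: xs := by
        rw [List.filter_eq_self]
        intro c hc
        simp only [decide_eq_true_eq]
        rcases List.mem_cons.mp hc with rfl | hc
        · exact Nat.not_le.mp hx
        · exact hall c hc
      rw [h1, h2, List.nil_append]

theorem decomp (l : List ℕ) (h : l.Pairwise (fun a b => b ≤ a)) :
    l = l.filter (fun c => decide (6 ≤ c))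
      ++ (List.replicate (l.filter (fun c => decide (c = 5))).length 5
      ++ (List.replicate (l.filter (fun c => decide (c = 4))).length 4
      ++ l.filter (fun c => decide (c ≤ 3)))) := by
  have h6 := split_filter 6 l h
  have hBp : (l.filter (fun c => decide (c < 6))).Pairwise (fun a b => b ≤ a) := h.filter _
  have h5 := split_filter 5 _ hBp
  have e5 : (l.filter (fun c => decide (c < 6))).filter (fun c => decide (5 ≤ c))
      = l.filter (fun c => decide (c = 5)) := by
    rw [List.filter_filter]
    apply List.filter_congr
    intro x _
    rw [Bool.eq_iff_iff]; simp only [Bool.and_eq_true, decide_eq_true_eq]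
    omega
  have e45 : (l.filter (fun c => decide (c < 6))).filter (fun c => decide (c < 5))
      = l.filter (fun c => decide (c < 5)) := by
    rw [List.filter_filter]
    apply List.filter_congr
    intro x _
    rw [Bool.eq_iff_iff]; simp only [Bool.and_eq_true, decide_eq_true_eq]
    omega
  have hB4p : (l.filter (fun c => decide (c < 5))).Pairwise (fun a b => b ≤ a) := h.filter _
  have h4 := split_filter 4 _ hB4p
  have e4 : (l.filter (fun c => decide (c < 5))).filter (fun c => decide (4 ≤ c))
      = l.filter (fun c => decide (c = 4)) := by
    rw [List.filter_filter]
    apply List.filter_congr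
    intro x _
    rw [Bool.eq_iff_iff]; simp only [Bool.and_eq_true, decide_eq_true_eq]
    omega
  have e3 : (l.filter (fun c => decide (c < 5))).filter (fun c => decide (c < 4))
      = l.filter (fun c => decide (c ≤ 3)) := by
    rw [List.filter_filter]
    apply List.filter_congr
    intro x _
    rw [Bool.eq_iff_iff]; simp only [Bool.and_eq_true, decide_eq_true_eq]
    omega
  have r5 : l.filter (fun c => decide (c = 5))
      = List.replicate (l.filter (fun c => decide (c = 5))).length 5 := by
    rw [List.eq_replicate_length]
    intro b hb
    have := List.of_mem_filter hb
    simpa using this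
  have r4 : l.filter (fun c => decide (c = 4))
      = List.replicate (l.filter (fun c => decide (c = 4))).length 4 := by
    rw [List.eq_replicate_length]
    intro b hb
    have := List.of_mem_filter hb
    simpa using this
  rw [e5, e45] at h5
  rw [e4, e3] at h4
  rw [← r5, ← r4]
  rw [h4] at h5
  rw [h5] at h6
  simpa using h6

theorem sum_map_sub (f g : ℕ → ℝ) : ∀ (l : List ℕ),
    (l.map (fun x => f x - g x)).sum = (l.map f).sum - (l.map g).sum := by
  intro l
  induction l with
  | nil => simp
  | cons x xs ih => simp [ih]; ring

/-- Lemma 1(1) of the paper.  `Φa = ⟨φ1, φ2⟩` is a landing sequence where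
`φ1` and `φ2` are class-monotonically-decreasing and `cl_{n1} < cl_{n1+1}`; `Φb` is a
class-monotonically-decreasing merge of the same aircraft; in both, each aircraft other
than the first is relevant to its leading aircraft, both start at time `t0`, and every
aircraft is delayed in both.  If `cl_{n1} = ρ2 − 1 = 4`, `cl_{n1+1} = ρ2 = 5` and some
aircraft among `Tcf_1, …, Tcf_{n1−1}` has class `ρ2 = 5`, then `F(Φa) < F(Φb)`. -/
theorem merge_landing_case1
    (η : ℕ) (T : ℕ → ℕ → ℝ) (T0 δ t0 : ℝ)
    (hL : LandingAssumptions η T T0 δ)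
    (cl : ℕ → ℕ) (P Sa Sb : ℕ → ℝ)
    (Y : ℕ → ℕ → ℝ) (hY : ∀ u v, Y u v = T (cl u) (cl v))
    (φ1 φ2 : List ℕ) (hφ1 : φ1 ≠ []) (hφ2 : φ2 ≠ [])
    (Φa Φb : List ℕ) (hΦa : Φa = φ1 ++ φ2)
    (hperm : Φb.Perm Φa)
    (hnodup : Φa.Nodup)
    (hclrange : ∀ z ∈ Φa, 1 ≤ cl z ∧ cl z ≤ η)
    (hdec1 : φ1.Chain' (fun u v => cl v ≤ cl u))
    (hdec2 : φ2.Chain' (fun u v => cl v ≤ cl u))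
    (hbreak : cl φ1.getLastI < cl φ2.headI)
    (hdecb : Φb.Chain' (fun u v => cl v ≤ cl u))
    (hchaina : Φa.Chain' (fun u v => Sa v = Sa u + Y u v))
    (hchainb : Φb.Chain' (fun u v => Sb v = Sb u + Y u v))
    (hstarta : ∀ z, Φa.head? = some z → Sa z = t0)
    (hstartb : ∀ z, Φb.head? = some z → Sb z = t0)
    (hdelay : ∀ z ∈ Φa, 0 < P z ∧ P z < Sa z ∧ P z < Sb z)
    (hc1 : cl φ1.getLastI = 4) (hc2 : cl φ2.headI = 5)
    (hc3 : ∃ z ∈ φ1.dropLast, cl z = 5) :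
    totalDelay Sa P Φa < totalDelay Sb P Φb := by
  have hη := hL.eta_ge
  have hδ : 0 < δ := by
    linarith [hL.delta_lb, hL.T0_pos]
  have h55 : T 5 5 = T0 + δ := hL.diag35 5 (Or.inr rfl)
  have h44 : T 4 4 = T0 :=
    hL.diag_other 4 (by norm_num) (by omega) (by norm_num) (by norm_num) (by norm_num)
      (by norm_num)
  have h54 : T 5 4 = T0 := hL.lower 5 4 (by norm_num) (by norm_num) (by omega) (by norm_num)
  have h45 : T 4 5 = T0 + δ := hL.succ45
  -- decompose φ1 and φ2
  rcases List.eq_nil_or_concat φ1 with h | ⟨ys, y, hy⟩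
  · exact absurd h hφ1
  rw [List.concat_eq_append] at hy
  obtain ⟨w, ws, hw⟩ := List.exists_cons_of_ne_nil hφ2
  have hcy : cl y = 4 := by
    rw [← hc1, hy]; simp [List.getLastI_eq_getLast?]
  have hcw : cl w = 5 := by rw [← hc2, hw]; rfl
  -- sortedness of class lists
  have hs1 : (φ1.map cl).Pairwise (fun a b => b ≤ a) :=
    List.isChain_iff_pairwise.mp ((List.isChain_map cl).mpr hdec1)
  have hs2 : (φ2.map cl).Pairwise (fun a b => b ≤ a) :=
    List.isChain_iff_pairwise.mp ((List.isChain_map cl).mpr hdec2)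
  have hsb : (Φb.map cl).Pairwise (fun a b => b ≤ a) :=
    List.isChain_iff_pairwise.mp ((List.isChain_map cl).mpr hdecb)
  set X1 := φ1.map cl with hX1def
  set X2 := φ2.map cl with hX2def
  set Xb := Φb.map cl with hXbdef
  have d1 := decomp X1 hs1
  have d2 := decomp X2 hs2
  have db := decomp Xb hsb
  -- facts about X1
  have hmem4 : ∀ c ∈ X1, 4 ≤ c := by
    intro c hc
    have hs1' : (List.map cl ys ++ [cl y]).Pairwise (fun a b => b ≤ a) := by
      have : X1 = List.map cl ys ++ [cl y] := by rw [hX1def, hy, List.map_append]; rfl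
      rw [← this]; exact hs1
    have hc' : c ∈ List.map cl ys ++ [cl y] := by
      rw [← (show X1 = List.map cl ys ++ [cl y] by rw [hX1def, hy, List.map_append]; rfl)]
      exact hc
    rcases List.mem_append.mp hc' with h | h
    · have := (List.pairwise_append.mp hs1').2.2 c h (cl y) (by simp)
      omega
    · simp at h; omega
  have hF31 : X1.filter (fun c => decide (c ≤ 3)) = [] := by
    rw [List.filter_eq_nil_iff]
    intro c hc
    have := hmem4 c hc
    simp only [decide_eq_true_eq]
    omega
  have h5X1 : (5:ℕ) ∈ X1 := by
    obtain ⟨z, hz, hcz⟩ := hc3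
    rw [hX1def, ← hcz]
    exact List.mem_map_of_mem (f := cl) (List.dropLast_subset φ1 hz)
  have h4X1 : (4:ℕ) ∈ X1 := by
    rw [hX1def, ← hcy]
    exact List.mem_map_of_mem (f := cl) (by rw [hy]; simp)
  have hk : (X1.filter (fun c => decide (c = 5))).length ≠ 0 := by
    have hmem : (5:ℕ) ∈ X1.filter (fun c => decide (c = 5)) :=
      List.mem_filter.mpr ⟨h5X1, by simp⟩
    intro h0
    rw [List.length_eq_zero_iff] at h0
    rw [h0] at hmem
    exact absurd hmem List.not_mem_nil
  have hm : (X1.filter (fun c => decide (c = 4))).length ≠ 0 := by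
    have hmem : (4:ℕ) ∈ X1.filter (fun c => decide (c = 4)) :=
      List.mem_filter.mpr ⟨h4X1, by simp⟩
    intro h0
    rw [List.length_eq_zero_iff] at h0
    rw [h0] at hmem
    exact absurd hmem List.not_mem_nil
  -- facts about X2
  have hX2w : X2 = cl w :: List.map cl ws := by rw [hX2def, hw]; rfl
  have hmem5 : ∀ c ∈ X2, c ≤ 5 := by
    intro c hc
    rw [hX2w] at hc
    rcases List.mem_cons.mp hc with rfl | h
    · omega
    · have hs2' : (cl w :: List.map cl ws).Pairwise (fun a b => b ≤ a) := by
        rw [← hX2w]; exact hs2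
      have := (List.pairwise_cons.mp hs2').1 c h
      omega
  have hF62 : X2.filter (fun c => decide (6 ≤ c)) = [] := by
    rw [List.filter_eq_nil_iff]
    intro c hc
    have := hmem5 c hc
    simp only [decide_eq_true_eq]
    omega
  have h5X2 : (5:ℕ) ∈ X2 := by rw [hX2w, hcw]; simp
  have hk' : (X2.filter (fun c => decide (c = 5))).length ≠ 0 := by
    have hmem : (5:ℕ) ∈ X2.filter (fun c => decide (c = 5)) :=
      List.mem_filter.mpr ⟨h5X2, by simp⟩
    intro h0
    rw [List.length_eq_zero_iff] at h0
    rw [h0] at hmem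
    exact absurd hmem List.not_mem_nil
  -- perm of class lists
  have hXa : Φa.map cl = X1 ++ X2 := by rw [hΦa, List.map_append]
  have hpermc : Xb.Perm (X1 ++ X2) := by
    rw [← hXa]; exact hperm.map cl
  -- identify the pieces of Xb
  have hA : Xb.filter (fun c => decide (6 ≤ c)) = X1.filter (fun c => decide (6 ≤ c)) := by
    refine List.Perm.eq_of_pairwise (le := fun a b => b ≤ a) (fun a b _ _ h1 h2 => le_antisymm h2 h1) (hsb.filter _) (hs1.filter _) ?_
    have := hpermc.filter (fun c => decide (6 ≤ c))
    rwa [List.filter_append, hF62, List.append_nil] at this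
  have hD : Xb.filter (fun c => decide (c ≤ 3)) = X2.filter (fun c => decide (c ≤ 3)) := by
    refine List.Perm.eq_of_pairwise (le := fun a b => b ≤ a) (fun a b _ _ h1 h2 => le_antisymm h2 h1) (hsb.filter _) (hs2.filter _) ?_
    have := hpermc.filter (fun c => decide (c ≤ 3))
    rwa [List.filter_append, hF31, List.nil_append] at this
  have hK : (Xb.filter (fun c => decide (c = 5))).length
      = (X1.filter (fun c => decide (c = 5))).length
        + (X2.filter (fun c => decide (c = 5))).length := by
    rw [(hpermc.filter (fun c => decide (c = 5))).length_eq, List.filter_append,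
      List.length_append]
  have hM : (Xb.filter (fun c => decide (c = 4))).length
      = (X1.filter (fun c => decide (c = 4))).length
        + (X2.filter (fun c => decide (c = 4))).length := by
    rw [(hpermc.filter (fun c => decide (c = 4))).length_eq, List.filter_append,
      List.length_append]
  -- name the parameters
  obtain ⟨a, ha⟩ : ∃ a, (X1.filter (fun c => decide (c = 5))).length = a + 1 :=
    ⟨(X1.filter (fun c => decide (c = 5))).length - 1, by omega⟩
  obtain ⟨b, hb⟩ : ∃ b, (X1.filter (fun c => decide (c = 4))).length = b + 1 :=
    ⟨(X1.filter (fun c => decide (c = 4))).length - 1, by omega⟩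
  obtain ⟨c, hc⟩ : ∃ c, (X2.filter (fun c => decide (c = 5))).length = c + 1 :=
    ⟨(X2.filter (fun c => decide (c = 5))).length - 1, by omega⟩
  set m' := (X2.filter (fun c => decide (c = 4))).length with hm'def
  set D := X2.filter (fun c => decide (c ≤ 3)) with hDdef
  set A := X1.filter (fun c => decide (6 ≤ c)) with hAdef
  set R : List ℕ := List.replicate m' 4 ++ D with hRdef
  have hXa2 : X1 ++ X2 = A ++ (List.replicate (a+1) 5 ++ (List.replicate (b+1) 4
      ++ (List.replicate (c+1) 5 ++ R))) := by
    conv_lhs => rw [d1, d2]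
    rw [hF31, hF62, ha, hb, hc, hRdef]
    simp [List.append_assoc]
  have hXb2 : Xb = A ++ (List.replicate (a+c+2) 5 ++ (List.replicate (b+1) 4 ++ R)) := by
    conv_lhs => rw [db]
    rw [hA, hD, hK, hM, ha, hb, hc]
    have e1 : a + 1 + (c + 1) = a + c + 2 := by omega
    have e2 : b + 1 + m' = (b + 1) + m' := rfl
    rw [e1, List.replicate_add (b+1) m' 4, hRdef, List.append_assoc]
  -- condition on R
  have hRcond : R = [] ∨ (T 5 R.headI = T0 ∧ T 4 R.headI = T0) := by
    rcases Nat.eq_zero_or_pos m' with h0 | hpos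
    · have hRD : R = D := by rw [hRdef, h0]; simp
      rcases hDD : D with _ | ⟨d, D'⟩
      · left; rw [hRD, hDD]
      · right
        have hdD : d ∈ D := by rw [hDD]; simp
        have hd3 : d ≤ 3 := by
          have := List.of_mem_filter (hDdef ▸ hdD)
          simpa using this
        have hd1 : 1 ≤ d := by
          have hdX2 : d ∈ X2 := List.mem_of_mem_filter (hDdef ▸ hdD)
          rw [hX2def] at hdX2
          obtain ⟨z, hz, hcz⟩ := List.mem_map.mp hdX2
          have hzΦa : z ∈ Φa := by rw [hΦa]; exact List.mem_append_right _ hz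
          have := (hclrange z hzΦa).1
          omega
        have hhd : R.headI = d := by rw [hRD, hDD]; rfl
        rw [hhd]
        constructor
        · exact hL.lower 5 d (by omega) (by omega) (by omega) (by norm_num)
        · exact hL.lower 4 d (by omega) (by omega) (by omega) (by norm_num)
    · right
      obtain ⟨m0, hm0⟩ : ∃ m0, m' = m0 + 1 := ⟨m' - 1, by omega⟩
      have hhd : R.headI = 4 := by
        rw [hRdef, hm0, List.replicate_succ]; rfl
      rw [hhd]
      exact ⟨h54, h44⟩
  -- the Gc inequality
  have hGc : Gc T (Φa.map cl) < Gc T Xb := by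
    rw [hXa, hXa2, hXb2]
    have e2 : a + c + 2 = (a + c + 1) + 1 := by omega
    apply Gc_append_lt
    · simp only [List.length_append, List.length_replicate]
      omega
    · rw [e2]
      simp [List.replicate_succ]
    · simp
    · simp
    · exact Gc_core T T0 δ hδ h55 h44 h54 h45 R hRcond a b c
  -- chain sums
  simp only [hY] at hchaina hchainb
  have hsa := chainSum T cl Sa Φa t0 hchaina hstarta
  have hsbS := chainSum T cl Sb Φb t0 hchainb hstartb
  -- totalDelay rewrites
  have ta : totalDelay Sa P Φa = (Φa.map Sa).sum - (Φa.map P).sum := by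
    have hmc : Φa.map (fun x => max (Sa x - P x) 0) = Φa.map (fun x => Sa x - P x) :=
      List.map_congr_left (fun z hz => by
        have h := hdelay z hz
        exact max_eq_left (by linarith [h.2.1]))
    rw [totalDelay, hmc, sum_map_sub]
  have tb : totalDelay Sb P Φb = (Φb.map Sb).sum - (Φb.map P).sum := by
    have hmc : Φb.map (fun x => max (Sb x - P x) 0) = Φb.map (fun x => Sb x - P x) :=
      List.map_congr_left (fun z hz => by
        have h := hdelay z (hperm.subset hz)
        exact max_eq_left (by linarith [h.2.2]))
    rw [totalDelay, hmc, sum_map_sub]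
  have hP : (Φb.map P).sum = (Φa.map P).sum := (hperm.map P).sum_eq
  have hlen : (Φb.length : ℝ) = (Φa.length : ℝ) := by rw [hperm.length_eq]
  rw [ta, tb, hsa, hsbS, hP, hlen]
  linarith [hGc]
end
end

section
/- Consider a mixed landing and takeoff sequence Φ_a = ⟨φ_{a1}, φ_{a2}⟩ on a same runway or on dual runways, where φ_{a1} = ⟨Tcf_1, …, Tcf_{m_0}⟩ for some integer m_0 > 0 and φ_{a2} = ⟨Tcf_{m_0+1}, …, Tcf_{m_0+m_1}⟩ for some integer m_1 > 0, and exactly m_2 aircraft of φ_{a2} are delayed in Φ_a (i.e., have S exceeding their scheduled time P). Let Φ_b = ⟨φ_{b1}, φ_{a2}⟩ be a sequence of the same group of aircraft, where φ_{b1} is a reordering of the aircraft of φ_{a1}, and at least m_2 aircraft of φ_{a2} are delayed in Φ_b. Suppose that in both Φ_a and Φ_b each aircraft other than the first is relevant to its leading aircraft. If m_2·(S_{m_0+1}(Φ_b) − S_{m_0+1}(Φ_a)) + F(φ_{b1}, Sr(φ_{b1})) − F(φ_{a1}, Sr(φ_{a1})) > 0, then F(Φ_a) − F(Φ_b) < 0.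 -/
noncomputable section

open scoped Classical

lemma totalDelay_append (S P : ℕ → ℝ) (l1 l2 : List ℕ) :
    totalDelay S P (l1 ++ l2) = totalDelay S P l1 + totalDelay S P l2 := by
  simp [totalDelay]

lemma chain_shift (Y : ℕ → ℕ → ℝ) (Sa Sb : ℕ → ℝ) :
    ∀ (l : List ℕ), l.Chain' (fun u v => Sa v = Sa u + Y u v) →
      l.Chain' (fun u v => Sb v = Sb u + Y u v) →
      ∀ z ∈ l, Sb z - Sa z = Sb l.headI - Sa l.headI
  | [], _, _, z, hz => by simp at hz
  | [x], _, _, z, hz => by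
      simp only [List.mem_singleton] at hz
      subst hz; simp
  | x :: y :: t, h1, h2, z, hz => by
      unfold List.Chain' at h1 h2; rw [List.isChain_cons_cons] at h1 h2
      obtain ⟨hxy1, h1'⟩ := h1
      obtain ⟨hxy2, h2'⟩ := h2
      simp only [List.headI]
      rcases List.mem_cons.1 hz with rfl | hz'
      · rfl
      · have := chain_shift Y Sa Sb (y :: t) h1' h2' z hz'
        simp only [List.headI] at this
        rw [this, hxy1, hxy2]; ring

lemma sum_bound (Sa Sb P : ℕ → ℝ) (d : ℝ) :
    ∀ (l : List ℕ), (∀ z ∈ l, Sb z = Sa z + d) →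
    ((l.countP (fun z => decide (P z < Sa z)) : ℕ) : ℝ) * d
      ≤ totalDelay Sb P l - totalDelay Sa P l := by
  intro l
  induction l with
  | nil => simp [totalDelay]
  | cons x t ih =>
    intro h
    have hx : Sb x = Sa x + d := h x List.mem_cons_self
    have ht := ih (fun z hz => h z (List.mem_cons_of_mem x hz))
    have hTa : totalDelay Sa P (x :: t)
        = max (Sa x - P x) 0 + totalDelay Sa P t := by simp [totalDelay]
    have hTb : totalDelay Sb P (x :: t)
        = max (Sb x - P x) 0 + totalDelay Sb P t := by simp [totalDelay]
    rw [hTa, hTb, List.countP_cons]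
    by_cases hd : P x < Sa x
    · have hcnt : (decide (P x < Sa x)) = true := by simp [hd]
      rw [hcnt]
      push_cast
      have h1 : max (Sa x - P x) 0 = Sa x - P x := by
        apply max_eq_left; linarith
      have h2 : Sb x - P x ≤ max (Sb x - P x) 0 := le_max_left _ _
      rw [h1]
      have h3 : Sb x - P x = Sa x - P x + d := by rw [hx]; ring
      simp only [if_true]
      have hmul : ((List.countP (fun z => decide (P z < Sa z)) t : ℕ) + (1:ℝ)) * d
          = (List.countP (fun z => decide (P z < Sa z)) t : ℕ) * d + d := by ring
      rw [hmul]
      linarith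
    · have hcnt : (decide (P x < Sa x)) = false := by simp [hd]
      rw [hcnt]
      push_cast
      have h1 : max (Sa x - P x) 0 = 0 := by
        apply max_eq_right; linarith [not_lt.mp hd]
      have h2 : (0:ℝ) ≤ max (Sb x - P x) 0 := le_max_right _ _
      rw [h1]
      linarith

/-- Theorem 6 of the paper.  `Φa = ⟨φa1, φa2⟩` is a mixed landing and
takeoff sequence on a same runway or dual runways in which exactly `m2` aircraft of `φa2`
are delayed, and `Φb = ⟨φb1, φa2⟩` is a sequence of the same group of aircraft (`φb1` a
reordering of `φa1`) in which at least `m2` aircraft of `φa2` are delayed; in both, each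
aircraft other than the first is relevant to its leading aircraft.  If
`m2·(S_{m0+1}(Φb) − S_{m0+1}(Φa)) + F(φb1, Sr(φb1)) − F(φa1, Sr(φa1)) > 0`, then
`F(Φa) − F(Φb) < 0`. -/
theorem improving_prefix_reordering
    (Y : ℕ → ℕ → ℝ) (P Sa Sb : ℕ → ℝ)
    (φa1 φb1 φa2 : List ℕ) (ha1 : φa1 ≠ []) (ha2 : φa2 ≠ [])
    (hperm : φb1.Perm φa1)
    (Φa Φb : List ℕ) (hΦa : Φa = φa1 ++ φa2) (hΦb : Φb = φb1 ++ φa2)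
    (hnodup : Φa.Nodup)
    (hchaina : Φa.Chain' (fun u v => Sa v = Sa u + Y u v))
    (hchainb : Φb.Chain' (fun u v => Sb v = Sb u + Y u v))
    (m2 : ℕ)
    (hm2a : φa2.countP (fun z => decide (P z < Sa z)) = m2)
    (hm2b : m2 ≤ φa2.countP (fun z => decide (P z < Sb z)))
    (hcond : 0 < (m2 : ℝ) * (Sb φa2.headI - Sa φa2.headI)
        + totalDelay Sb P φb1 - totalDelay Sa P φa1) :
    totalDelay Sa P Φa - totalDelay Sb P Φb < 0 := by
  subst hΦa hΦb
  have hsa : φa2.Chain' (fun u v => Sa v = Sa u + Y u v) :=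
    hchaina.suffix (List.suffix_append _ _)
  have hsb : φa2.Chain' (fun u v => Sb v = Sb u + Y u v) :=
    hchainb.suffix (List.suffix_append _ _)
  set d : ℝ := Sb φa2.headI - Sa φa2.headI with hd
  have hshift : ∀ z ∈ φa2, Sb z = Sa z + d := by
    intro z hz
    have := chain_shift Y Sa Sb φa2 hsa hsb z hz
    linarith [this]
  have hsum := sum_bound Sa Sb P d φa2 hshift
  rw [hm2a] at hsum
  rw [totalDelay_append, totalDelay_append]
  linarith
end
end
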